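/- arXiv:math/0103229 — 4 statements merged into one kernel-verified Lean document; each statement's English description precedes it below -/
import Mathlib

section
/- If D is a digraph with d vertices, then the cover polynomials of D and its complement satisfy C(D′; i, j) = (−1)^d · C(D; −i−j, j) as an identity of polynomials in i and j. -/
open scoped Classical
open Finset Relation

noncomputable section

/-- The multiset of nonzero exponents of a monomial. -/
def expShape {σ : Type*} (d : σ →₀ ℕ) : Multiset ℕ := d.support.val.map d

/-- The monomial symmetric function `m_lam` in the variables satisfying `P`,
as a formal power series in countably many commuting variables indexed by `σ`. -/
def msfP {σ : Type*} (P : σ → Prop) (lam : Multiset ℕ) : MvPowerSeries σ ℚ :=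
  fun d => if (∀ s ∈ d.support, P s) ∧ expShape d = lam then 1 else 0

/-- `∏_i r_i!` where `r_i` is the number of parts of `lam` equal to `i`. -/
def rfact (lam : Multiset ℕ) : ℕ :=
  lam.toFinset.prod fun i => (lam.count i).factorial

/-- The augmented monomial symmetric function `m̃_lam` in the variables satisfying `P`. -/
def maugP {σ : Type*} (P : σ → Prop) (lam : Multiset ℕ) : MvPowerSeries σ ℚ :=
  (rfact lam : ℚ) • msfP P lam

/-- The power sum symmetric function `p_lam` in the variables satisfying `P`. -/
def ppP {σ : Type*} (P : σ → Prop) (lam : Multiset ℕ) : MvPowerSeries σ ℚ :=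
  (lam.map fun n => msfP P ({n} : Multiset ℕ)).prod

/-- `sgn λ = (-1)^(|λ| - ℓ(λ))`. -/
def psgn (lam : Multiset ℕ) : ℚ := (-1 : ℚ) ^ (lam.sum - Multiset.card lam)

/-- The `x`-variables inside the two-variable-family ring. -/
def xVar : ℕ ⊕ ℕ → Prop := fun s => s.isLeft = true

/-- The `y`-variables inside the two-variable-family ring. -/
def yVar : ℕ ⊕ ℕ → Prop := fun s => s.isRight = true

/-- A path-cycle cover of the digraph with vertex set `V` and edge set `E`, encoded by its
(injective, partially defined) successor function.  The connected components of such a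
spanning subgraph are exactly directed paths and directed cycles. -/
structure PCC {V : Type*} [Fintype V] [DecidableEq V] (E : Finset (V × V)) where
  next : V → Option V
  mem_edges : ∀ u v, next u = some v → (u, v) ∈ E
  inj : ∀ u u' v, next u = some v → next u' = some v → u = u'

namespace PCC

variable {V : Type*} [Fintype V] [DecidableEq V] {E : Finset (V × V)}

noncomputable instance : Fintype (PCC E) :=
  Fintype.ofInjective (fun S : PCC E => S.next) (by
    intro a b h; cases a; cases b; simp_all)

/-- Iterated successor. -/
def iterNext (S : PCC E) : ℕ → V → Option V
  | 0, v => some v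
  | n + 1, v => (iterNext S n v).bind S.next

/-- A vertex lying on one of the directed cycles of the path-cycle cover. -/
def IsCyclicVert (S : PCC E) (v : V) : Prop := ∃ k : ℕ, 0 < k ∧ iterNext S k v = some v

/-- Two vertices lie in the same connected component (path or cycle). -/
def connRel (S : PCC E) : V → V → Prop := EqvGen fun a b => S.next a = some b

/-- The connected component of a vertex. -/
def blockOf (S : PCC E) (v : V) : Finset V := univ.filter fun u => connRel S v u

/-- The partition of the vertex set into connected components. -/
def blocks (S : PCC E) : Finset (Finset V) := univ.image (blockOf S)

/-- `π(S)`: the multiset of sizes of the directed-path components. -/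
def pathType (S : PCC E) : Multiset ℕ :=
  (((blocks S).filter fun b => ¬∃ v ∈ b, IsCyclicVert S v).val).map Finset.card

/-- `σ(S)`: the multiset of sizes of the directed-cycle components. -/
def cycleType (S : PCC E) : Multiset ℕ :=
  (((blocks S).filter fun b => ∃ v ∈ b, IsCyclicVert S v).val).map Finset.card


/-! ### chunk 1 : orbits -/

def step (S : PCC E) (a b : V) : Prop := S.next a = some b

lemma iterNext_zero (S : PCC E) (v : V) : iterNext S 0 v = some v := rfl

lemma iterNext_succ (S : PCC E) (n : ℕ) (v : V) :
    iterNext S (n+1) v = (iterNext S n v).bind S.next := rfl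

lemma iterNext_add (S : PCC E) (m n : ℕ) (v : V) :
    iterNext S (m + n) v = (iterNext S m v).bind (iterNext S n) := by
  induction n with
  | zero => cases h : iterNext S m v <;> simp [h, iterNext_zero]
  | succ n ih =>
      rw [show m + (n+1) = (m+n)+1 by ring, iterNext_succ, ih]
      cases h : iterNext S m v <;> simp [h, iterNext_succ]

lemma iterNext_succ' (S : PCC E) (n : ℕ) (v : V) :
    iterNext S (n+1) v = (S.next v).bind (iterNext S n) := by
  rw [show n+1 = 1+n by ring, iterNext_add]
  have h1 : iterNext S 1 v = S.next v := by
    rw [iterNext_succ, iterNext_zero]; simp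
  rw [h1]

lemma rtg_iff_iter (S : PCC E) (a b : V) :
    ReflTransGen (step S) a b ↔ ∃ n, iterNext S n a = some b := by
  constructor
  · intro h
    induction h with
    | refl => exact ⟨0, rfl⟩
    | tail _ hbc ih =>
        obtain ⟨n, hn⟩ := ih
        exact ⟨n+1, by rw [iterNext_succ, hn]; exact hbc⟩
  · rintro ⟨n, hn⟩
    induction n generalizing b with
    | zero => cases hn; exact ReflTransGen.refl
    | succ n ih =>
        rw [iterNext_succ] at hn
        obtain ⟨y, hy, hyb⟩ := Option.bind_eq_some_iff.mp hn
        exact ReflTransGen.tail (ih y hy) hyb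

lemma iter_inj (S : PCC E) (n : ℕ) {a b w : V}
    (ha : iterNext S n a = some w) (hb : iterNext S n b = some w) : a = b := by
  induction n generalizing w with
  | zero => cases ha; cases hb; rfl
  | succ n ih =>
      rw [iterNext_succ] at ha hb
      obtain ⟨ya, hya, hyaw⟩ := Option.bind_eq_some_iff.mp ha
      obtain ⟨yb, hyb, hybw⟩ := Option.bind_eq_some_iff.mp hb
      have : ya = yb := S.inj _ _ _ hyaw hybw
      subst this
      exact ih hya hyb

lemma rtg_comparable (S : PCC E) {a b w : V}
    (ha : ReflTransGen (step S) a w) (hb : ReflTransGen (step S) b w) :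
    ReflTransGen (step S) a b ∨ ReflTransGen (step S) b a := by
  rw [rtg_iff_iter] at ha hb
  obtain ⟨m, hm⟩ := ha; obtain ⟨n, hn⟩ := hb
  rcases le_total m n with h | h
  · right
    obtain ⟨k, rfl⟩ := Nat.exists_eq_add_of_le h
    rw [show m + k = k + m by ring, iterNext_add] at hn
    obtain ⟨y, hy, hyw⟩ := Option.bind_eq_some_iff.mp hn
    have hya : y = a := iter_inj S m hyw hm
    subst hya
    exact (rtg_iff_iter S b y).mpr ⟨k, hy⟩
  · left
    obtain ⟨k, rfl⟩ := Nat.exists_eq_add_of_le h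
    rw [show n + k = k + n by ring, iterNext_add] at hm
    obtain ⟨y, hy, hyw⟩ := Option.bind_eq_some_iff.mp hm
    have hyb : y = b := iter_inj S n hyw hn
    subst hyb
    exact (rtg_iff_iter S a y).mpr ⟨k, hy⟩

lemma cyclic_iff_transGen (S : PCC E) (v : V) :
    IsCyclicVert S v ↔ TransGen (step S) v v := by
  constructor
  · rintro ⟨k, hk, hiter⟩
    obtain ⟨n, rfl⟩ := Nat.exists_eq_succ_of_ne_zero hk.ne'
    rw [iterNext_succ'] at hiter
    obtain ⟨y, hy, hyv⟩ := Option.bind_eq_some_iff.mp hiter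
    exact TransGen.head' hy ((rtg_iff_iter S y v).mpr ⟨n, hyv⟩)
  · intro h
    obtain ⟨y, hy, hyv⟩ := TransGen.head'_iff.mp h
    obtain ⟨n, hn⟩ := (rtg_iff_iter S y v).mp hyv
    exact ⟨n+1, Nat.succ_pos n, by rw [iterNext_succ', hy]; exact hn⟩

lemma step_deterministic (S : PCC E) : ∀ a b c, step S a b → step S a c →
    ∃ d, ReflGen (step S) b d ∧ ReflTransGen (step S) c d := by
  intro a b c hb hc
  have hbc : b = c := by
    rw [step] at hb hc; rw [hb] at hc; exact Option.some_injective _ hc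
  refine ⟨c, ?_, ReflTransGen.refl⟩
  rw [hbc]

lemma join_equivalence (S : PCC E) : Equivalence (Join (ReflTransGen (step S))) :=
  equivalence_join_reflTransGen (step_deterministic S)

lemma connRel_iff_join (S : PCC E) (a b : V) :
    connRel S a b ↔ Join (ReflTransGen (step S)) a b := by
  constructor
  · intro h
    induction h with
    | rel x y hxy => exact ⟨y, ReflTransGen.single hxy, ReflTransGen.refl⟩
    | refl x => exact (join_equivalence S).refl x
    | symm x y _ ih => exact (join_equivalence S).symm ih
    | trans x y z _ _ ih1 ih2 => exact (join_equivalence S).trans ih1 ih2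
  · rintro ⟨w, haw, hbw⟩
    have key : ∀ x y, ReflTransGen (step S) x y → connRel S x y := by
      intro x y h
      induction h with
      | refl => exact EqvGen.refl _
      | tail _ h2 ih => exact EqvGen.trans _ _ _ ih (EqvGen.rel _ _ h2)
    exact EqvGen.trans _ _ _ (key a w haw) (EqvGen.symm _ _ (key b w hbw))

lemma connRel_equivalence (S : PCC E) : Equivalence (connRel S) :=
  ⟨fun x => EqvGen.refl x, fun h => EqvGen.symm _ _ h, fun h1 h2 => EqvGen.trans _ _ _ h1 h2⟩

/-- cyclic vertices: forward reachability stays on the cycle and comes back. -/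
lemma cyclic_rtg_forward (S : PCC E) {v w : V} (hc : IsCyclicVert S v)
    (h : ReflTransGen (step S) v w) : IsCyclicVert S w ∧ ReflTransGen (step S) w v := by
  obtain ⟨k, hk, hkv⟩ := hc
  obtain ⟨m, hm⟩ := (rtg_iff_iter S v w).mp h
  -- iterate the cycle enough times to pass m
  have mult : ∀ c : ℕ, iterNext S (c * k) v = some v := by
    intro c
    induction c with
    | zero => rw [Nat.zero_mul]; rfl
    | succ c ih =>
        rw [show (c+1) * k = c * k + k by ring, iterNext_add, ih]
        exact hkv
  have hle : m ≤ (m+1) * k := by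
    calc m ≤ m * k := Nat.le_mul_of_pos_right m hk
    _ ≤ (m+1) * k := Nat.mul_le_mul_right k (Nat.le_succ m)
  obtain ⟨r, hr⟩ := Nat.exists_eq_add_of_le hle
  have hthis : iterNext S (m + r) v = some v := by rw [← hr]; exact mult (m+1)
  rw [iterNext_add, hm] at hthis
  simp only [Option.bind_some] at hthis
  have hwv : ReflTransGen (step S) w v := (rtg_iff_iter S w v).mpr ⟨r, hthis⟩
  refine ⟨?_, hwv⟩
  rcases Nat.eq_zero_or_pos (r + m) with h0 | h0
  · have hr0 : r = 0 := by omega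
    have hm0 : m = 0 := by omega
    subst hr0; subst hm0
    have hvw : v = w := by simpa [iterNext_zero] using hm
    subst hvw
    exact ⟨k, hk, hkv⟩
  · refine ⟨r + m, h0, ?_⟩
    rw [iterNext_add, hthis]
    simpa using hm

/-! ### ends and starts -/

def IsEnd (S : PCC E) (v : V) : Prop := S.next v = none

def IsStart (S : PCC E) (v : V) : Prop := ∀ u, S.next u ≠ some v

lemma not_isEnd_of_cyclic (S : PCC E) {v : V} (h : IsCyclicVert S v) : ¬ IsEnd S v := by
  intro he
  obtain ⟨y, hy, _⟩ := TransGen.head'_iff.mp ((cyclic_iff_transGen S v).mp h)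
  rw [IsEnd] at he; rw [step, he] at hy; cases hy

lemma not_isStart_of_cyclic (S : PCC E) {v : V} (h : IsCyclicVert S v) : ¬ IsStart S v := by
  intro hs
  obtain ⟨y, hy, hyv⟩ := TransGen.tail'_iff.mp ((cyclic_iff_transGen S v).mp h)
  exact hs y hyv

lemma rtg_end_absorb (S : PCC E) {e w : V} (he : IsEnd S e)
    (h : ReflTransGen (step S) e w) : w = e := by
  induction h with
  | refl => rfl
  | tail h1 h2 ih => subst ih; rw [step, he] at h2; cases h2

lemma rtg_start_absorb (S : PCC E) {s w : V} (hs : IsStart S s)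
    (h : ReflTransGen (step S) w s) : w = s := by
  cases (ReflTransGen.cases_tail h) with
  | inl h => exact h.symm
  | inr h => obtain ⟨c, _, hc⟩ := h; exact absurd hc (hs c)

lemma join_end_iff (S : PCC E) {e : V} (he : IsEnd S e) (a : V) :
    Join (ReflTransGen (step S)) a e ↔ ReflTransGen (step S) a e := by
  constructor
  · rintro ⟨w, haw, hew⟩
    have : w = e := rtg_end_absorb S he hew
    subst this; exact haw
  · intro h; exact ⟨e, h, ReflTransGen.refl⟩

lemma end_unique (S : PCC E) {e1 e2 : V} (h1 : IsEnd S e1) (h2 : IsEnd S e2)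
    (h : Join (ReflTransGen (step S)) e1 e2) : e1 = e2 := by
  obtain ⟨w, hw1, hw2⟩ := h
  rw [rtg_end_absorb S h1 hw1] at hw2
  exact (rtg_end_absorb S h2 hw2)

lemma start_unique (S : PCC E) {s1 s2 : V} (h1 : IsStart S s1) (h2 : IsStart S s2)
    (h : Join (ReflTransGen (step S)) s1 s2) : s1 = s2 := by
  obtain ⟨w, hw1, hw2⟩ := h
  rcases rtg_comparable S hw1 hw2 with h | h
  · exact (rtg_start_absorb S h2 h)
  · exact (rtg_start_absorb S h1 h).symm

/-- one backward step of cyclicity, using injectivity. -/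
lemma cyclic_of_step_cyclic (S : PCC E) {a b : V} (hab : step S a b)
    (hb : IsCyclicVert S b) : IsCyclicVert S a := by
  obtain ⟨z, hbz, hzb⟩ := TransGen.tail'_iff.mp ((cyclic_iff_transGen S b).mp hb)
  have hzb' : S.next z = some b := hzb
  have hab' : S.next a = some b := hab
  have hza : z = a := S.inj z a b hzb' hab'
  subst hza
  exact (cyclic_iff_transGen S z).mpr (TransGen.head' hab hbz)

lemma cyclic_of_rtg_cyclic (S : PCC E) {v w : V} (h : ReflTransGen (step S) v w)
    (hw : IsCyclicVert S w) : IsCyclicVert S v := by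
  revert hw
  induction h with
  | refl => exact id
  | tail h1 h2 ih => exact fun hc => ih (cyclic_of_step_cyclic S h2 hc)

lemma cyclic_congr_of_connRel (S : PCC E) {a b : V} (h : connRel S a b) :
    (IsCyclicVert S a ↔ IsCyclicVert S b) := by
  rw [connRel_iff_join] at h
  obtain ⟨w, haw, hbw⟩ := h
  constructor
  · intro ha
    have hw := (cyclic_rtg_forward S ha haw).1
    exact cyclic_of_rtg_cyclic S hbw hw
  · intro hb
    have hw := (cyclic_rtg_forward S hb hbw).1
    exact cyclic_of_rtg_cyclic S haw hw

lemma end_exists (S : PCC E) {v : V} (hv : ¬ IsCyclicVert S v) :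
    ∃ e, ReflTransGen (step S) v e ∧ IsEnd S e := by
  by_contra hcon
  push_neg at hcon
  have total : ∀ n : ℕ, ∃ w, iterNext S n v = some w := by
    intro n
    induction n with
    | zero => exact ⟨v, rfl⟩
    | succ n ih =>
        obtain ⟨w, hw⟩ := ih
        have hrtg : ReflTransGen (step S) v w := (rtg_iff_iter S v w).mpr ⟨n, hw⟩
        have : ¬ IsEnd S w := hcon w hrtg
        rw [IsEnd] at this
        obtain ⟨w', hw'⟩ := Option.ne_none_iff_exists'.mp this
        exact ⟨w', by rw [iterNext_succ, hw]; exact hw'⟩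
  choose F hF using total
  have key : ∀ m n : ℕ, m < n → F m = F n → False := by
    intro m n hlt heq
    obtain ⟨k, hk⟩ := Nat.exists_eq_add_of_lt hlt
    have hiter : iterNext S (m + (k+1)) v = some (F m) := by
      rw [show m + (k+1) = m + k + 1 by ring, ← hk, heq]; exact hF n
    rw [iterNext_add, hF m] at hiter
    simp only [Option.bind_some] at hiter
    have hcyc : IsCyclicVert S (F m) := ⟨k+1, Nat.succ_pos k, hiter⟩
    exact hv (cyclic_of_rtg_cyclic S ((rtg_iff_iter S v (F m)).mpr ⟨m, hF m⟩) hcyc)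
  have : ¬ Function.Injective (fun n : Fin (Fintype.card V + 1) => F n) := by
    intro hinj
    have := Fintype.card_le_of_injective _ hinj
    simp at this
  rw [Function.not_injective_iff] at this
  obtain ⟨m, n, heq, hne⟩ := this
  rcases Ne.lt_or_gt hne with hlt | hlt
  · exact key m n (by exact_mod_cast hlt) heq
  · exact key n m (by exact_mod_cast hlt) heq.symm

/-! ### chunk 2 : counting -/

def ends (S : PCC E) : Finset V := univ.filter fun v => S.next v = none

def starts (S : PCC E) : Finset V := univ.filter fun v => ∀ u, S.next u ≠ some v

def supp (S : PCC E) : Finset V := univ.filter fun v => S.next v ≠ none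

def edg (S : PCC E) : Finset (V × V) := univ.filter fun p => S.next p.1 = some p.2

lemma mem_ends (S : PCC E) (v : V) : v ∈ ends S ↔ IsEnd S v := by
  simp [ends, IsEnd]

lemma mem_starts (S : PCC E) (v : V) : v ∈ starts S ↔ IsStart S v := by
  simp [starts, IsStart]

lemma card_ends (S : PCC E) : (ends S).card = Fintype.card V - (supp S).card := by
  have h := Finset.card_filter_add_card_filter_not
    (s := (univ : Finset V)) (p := fun v => S.next v = none)
  have hs : supp S = univ.filter (fun v => ¬ S.next v = none) := rfl
  rw [Finset.card_univ] at h
  rw [ends, hs]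
  omega

lemma card_supp_le (S : PCC E) : (supp S).card ≤ Fintype.card V :=
  le_trans (Finset.card_le_card (Finset.filter_subset _ _)) (by simp)

lemma card_edg (S : PCC E) : (edg S).card = (supp S).card := by
  apply Finset.card_bij (fun p _ => p.1)
  · intro p hp
    simp only [edg, Finset.mem_filter] at hp
    simp [supp, hp.2]
  · intro p hp q hq hpq
    simp only [edg, Finset.mem_filter] at hp hq
    ext
    · exact hpq
    · rw [hpq] at hp
      have := hp.2.symm.trans hq.2
      exact (Option.some_injective _ this.symm).symm
  · intro v hv
    simp only [supp, Finset.mem_filter] at hv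
    obtain ⟨w, hw⟩ := Option.ne_none_iff_exists'.mp hv.2
    exact ⟨(v, w), by simp [edg, hw], rfl⟩

lemma card_starts (S : PCC E) : (starts S).card = Fintype.card V - (supp S).card := by
  classical
  have hrange : (univ.filter fun v => ∃ u, S.next u = some v).card = (supp S).card := by
    apply Finset.card_bij (fun v hv => Classical.choose (Finset.mem_filter.mp hv).2)
    · intro v hv
      have := Classical.choose_spec (Finset.mem_filter.mp hv).2
      simp only [supp, Finset.mem_filter]
      exact ⟨Finset.mem_univ _, by rw [this]; simp⟩
    · intro v hv w hw hvw
      have h1 := Classical.choose_spec (Finset.mem_filter.mp hv).2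
      have h2 := Classical.choose_spec (Finset.mem_filter.mp hw).2
      rw [hvw] at h1
      rw [h1] at h2
      exact Option.some_injective _ h2
    · intro u hu
      simp only [supp, Finset.mem_filter] at hu
      obtain ⟨w, hw⟩ := Option.ne_none_iff_exists'.mp hu.2
      have hmem : w ∈ univ.filter fun v => ∃ u, S.next u = some v := by
        simp only [Finset.mem_filter]
        exact ⟨Finset.mem_univ _, u, hw⟩
      refine ⟨w, hmem, ?_⟩
      have := Classical.choose_spec (Finset.mem_filter.mp hmem).2
      exact S.inj _ _ _ this hw
  have h := Finset.card_filter_add_card_filter_not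
    (s := (univ : Finset V)) (p := fun v => ∃ u, S.next u = some v)
  have hs : starts S = univ.filter (fun v => ¬ ∃ u, S.next u = some v) := by
    ext v
    simp only [starts, Finset.mem_filter, Finset.mem_univ, true_and]
    push_neg
    rfl
  rw [Finset.card_univ] at h
  rw [hs]
  omega

lemma mem_blockOf (S : PCC E) (u v : V) : u ∈ blockOf S v ↔ connRel S v u := by
  simp [blockOf]

lemma blockOf_self (S : PCC E) (v : V) : v ∈ blockOf S v := by
  rw [mem_blockOf]; exact (connRel_equivalence S).refl v

lemma blockOf_eq_of_connRel (S : PCC E) {u v : V} (h : connRel S u v) :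
    blockOf S u = blockOf S v := by
  ext w
  rw [mem_blockOf, mem_blockOf]
  exact ⟨fun h2 => (connRel_equivalence S).trans ((connRel_equivalence S).symm h) h2,
    fun h2 => (connRel_equivalence S).trans h h2⟩

def pathBlocks (S : PCC E) : Finset (Finset V) :=
  (blocks S).filter fun b => ¬∃ v ∈ b, IsCyclicVert S v

def cycBlocks (S : PCC E) : Finset (Finset V) :=
  (blocks S).filter fun b => ∃ v ∈ b, IsCyclicVert S v

lemma card_pathType (S : PCC E) : Multiset.card (pathType S) = (pathBlocks S).card := by
  rw [pathType, Multiset.card_map]; rfl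

lemma card_cycleType (S : PCC E) : Multiset.card (cycleType S) = (cycBlocks S).card := by
  rw [cycleType, Multiset.card_map]; rfl

lemma blockOf_mem_blocks (S : PCC E) (v : V) : blockOf S v ∈ blocks S :=
  Finset.mem_image_of_mem _ (Finset.mem_univ v)

lemma blockOf_mem_pathBlocks (S : PCC E) {v : V} (hv : ¬ IsCyclicVert S v) :
    blockOf S v ∈ pathBlocks S := by
  rw [pathBlocks, Finset.mem_filter]
  refine ⟨blockOf_mem_blocks S v, ?_⟩
  rintro ⟨u, hu, hcyc⟩
  rw [mem_blockOf] at hu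
  exact hv ((cyclic_congr_of_connRel S hu).mpr hcyc)

lemma card_pathBlocks (S : PCC E) : (pathBlocks S).card = (ends S).card := by
  symm
  apply Finset.card_bij (fun e _ => blockOf S e)
  · intro e he
    rw [mem_ends] at he
    refine blockOf_mem_pathBlocks S (fun hc => not_isEnd_of_cyclic S hc he)
  · intro e1 h1 e2 h2 heq
    rw [mem_ends] at h1 h2
    have : e2 ∈ blockOf S e1 := heq ▸ blockOf_self S e2
    rw [mem_blockOf, connRel_iff_join] at this
    exact end_unique S h1 h2 this
  · intro b hb
    rw [pathBlocks, Finset.mem_filter] at hb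
    obtain ⟨hb1, hb2⟩ := hb
    obtain ⟨v, _, rfl⟩ := Finset.mem_image.mp hb1
    have hv : ¬ IsCyclicVert S v := fun hc => hb2 ⟨v, blockOf_self S v, hc⟩
    obtain ⟨e, hve, he⟩ := end_exists S hv
    have hconn : connRel S v e := by
      rw [connRel_iff_join]; exact ⟨e, hve, ReflTransGen.refl⟩
    exact ⟨e, (mem_ends S e).mpr he, (blockOf_eq_of_connRel S hconn).symm⟩

lemma blockOf_mem_pathBlocks_of_start (S : PCC E) {s : V} (hs : IsStart S s) :
    blockOf S s ∈ pathBlocks S := by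
  refine blockOf_mem_pathBlocks S (fun hc => not_isStart_of_cyclic S hc hs)

lemma start_exists (S : PCC E) {b : Finset V} (hb : b ∈ pathBlocks S) :
    ∃ s ∈ b, IsStart S s := by
  classical
  -- injective map from starts to pathBlocks, with equal cards, hence surjective
  have hinj : ∀ (s1 s2 : V), s1 ∈ starts S → s2 ∈ starts S →
      blockOf S s1 = blockOf S s2 → s1 = s2 := by
    intro s1 s2 h1 h2 heq
    rw [mem_starts] at h1 h2
    have : s2 ∈ blockOf S s1 := heq ▸ blockOf_self S s2
    rw [mem_blockOf, connRel_iff_join] at this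
    exact start_unique S h1 h2 this
  have hmaps : ∀ s ∈ starts S, blockOf S s ∈ pathBlocks S := by
    intro s hs
    exact blockOf_mem_pathBlocks_of_start S ((mem_starts S s).mp hs)
  have hcard : (pathBlocks S).card ≤ (starts S).card := by
    rw [card_pathBlocks, card_ends, card_starts]
  obtain ⟨s, hsmem, hsb⟩ := Finset.surj_on_of_inj_on_of_card_le
    (fun s _ => blockOf S s) hmaps hinj hcard b hb
  refine ⟨s, ?_, (mem_starts S s).mp hsmem⟩
  rw [hsb]; exact blockOf_self S s

lemma exists_unique_start_rtg (S : PCC E) {e : V} (he : IsEnd S e) :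
    ∃! s, IsStart S s ∧ ReflTransGen (step S) s e := by
  have hnc : ¬ IsCyclicVert S e := fun hc => not_isEnd_of_cyclic S hc he
  obtain ⟨s, hsb, hs⟩ := start_exists S (blockOf_mem_pathBlocks S hnc)
  rw [mem_blockOf, connRel_iff_join] at hsb
  -- hsb : Join e s; e end so Join e s means rtg s e? use join_end_iff on symm
  have hjoin : Join (ReflTransGen (step S)) s e := (join_equivalence S).symm hsb
  have hrtg : ReflTransGen (step S) s e := (join_end_iff S he s).mp hjoin
  refine ⟨s, ⟨hs, hrtg⟩, ?_⟩
  rintro s' ⟨hs', hrtg'⟩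
  exact start_unique S hs' hs ⟨e, hrtg', hrtg⟩

/-! ### congruence : everything depends only on `next` -/

section Congr
variable {E' : Finset (V × V)} (S : PCC E) (T : PCC E') (h : S.next = T.next)
include h

lemma iterNext_congr (n : ℕ) (v : V) : iterNext S n v = iterNext T n v := by
  induction n with
  | zero => rfl
  | succ n ih => rw [iterNext_succ, iterNext_succ, ih, h]

lemma cyclic_congr (v : V) : IsCyclicVert S v ↔ IsCyclicVert T v := by
  unfold IsCyclicVert
  constructor <;> rintro ⟨k, hk, hit⟩ <;> refine ⟨k, hk, ?_⟩
  · rw [← iterNext_congr S T h]; exact hit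
  · rw [iterNext_congr S T h]; exact hit

lemma connRel_congr : connRel S = connRel T := by
  unfold connRel; rw [h]

lemma blockOf_congr : blockOf S = blockOf T := by
  funext v; unfold blockOf; rw [connRel_congr S T h]

lemma blocks_congr : blocks S = blocks T := by
  unfold blocks; rw [blockOf_congr S T h]

lemma pathType_congr : pathType S = pathType T := by
  unfold pathType
  rw [blocks_congr S T h]
  have h2 : (T.blocks.filter fun b => ¬∃ v ∈ b, IsCyclicVert S v)
      = (T.blocks.filter fun b => ¬∃ v ∈ b, IsCyclicVert T v) :=
    Finset.filter_congr (fun b _ => by simp only [cyclic_congr S T h])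
  rw [h2]

lemma cycleType_congr : cycleType S = cycleType T := by
  unfold cycleType
  rw [blocks_congr S T h]
  have h2 : (T.blocks.filter fun b => ∃ v ∈ b, IsCyclicVert S v)
      = (T.blocks.filter fun b => ∃ v ∈ b, IsCyclicVert T v) :=
    Finset.filter_congr (fun b _ => by simp only [cyclic_congr S T h])
  rw [h2]

lemma ends_congr : ends S = ends T := by unfold ends; rw [h]

end Congr

lemma pcc_ext {S T : PCC E} (h : S.next = T.next) : S = T := by
  cases S; cases T; simp_all

/-! ### chunk 3 : adding one edge -/

section AddEdge

variable (S : PCC (univ : Finset (V × V))) (u v : V)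
  (hu : S.next u = none) (hv : ∀ w, S.next w ≠ some v)

def addEdge (hv : ∀ w, S.next w ≠ some v) : PCC (univ : Finset (V × V)) where
  next w := if w = u then some v else S.next w
  mem_edges := fun _ _ _ => Finset.mem_univ _
  inj := by
    intro w w' x hw hw'
    by_cases h1 : w = u
    · by_cases h2 : w' = u
      · rw [h1, h2]
      · exfalso
        rw [if_pos h1] at hw; rw [if_neg h2] at hw'
        cases hw
        exact hv w' hw'
    · by_cases h2 : w' = u
      · exfalso
        rw [if_neg h1] at hw; rw [if_pos h2] at hw'
        cases hw'
        exact hv w hw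
      · rw [if_neg h1] at hw; rw [if_neg h2] at hw'
        exact S.inj _ _ _ hw hw'

variable {S u v}


lemma addEdge_next_self : (addEdge S u v hv).next u = some v := by
  simp [addEdge]

lemma addEdge_next_ne {w : V} (h : w ≠ u) : (addEdge S u v hv).next w = S.next w := by
  simp [addEdge, h]

include hu in
lemma addEdge_step_iff (a b : V) :
    step (addEdge S u v hv) a b ↔ step S a b ∨ (a = u ∧ b = v) := by
  unfold step
  by_cases h : a = u
  · subst h
    rw [addEdge_next_self, hu]
    simp [eq_comm]
  · rw [addEdge_next_ne hv h]
    simp [h]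

include hu in
lemma step_mono {a b : V} (h : step S a b) : step (addEdge S u v hv) a b := by
  rw [addEdge_step_iff hu hv]; exact Or.inl h

include hu in
lemma rtg_mono {a b : V} (h : ReflTransGen (step S) a b) :
    ReflTransGen (step (addEdge S u v hv)) a b :=
  ReflTransGen.mono (fun _ _ hs => step_mono hu hv hs) a b h

include hu in
lemma addEdge_rtg_iff (a b : V) :
    ReflTransGen (step (addEdge S u v hv)) a b ↔
      ReflTransGen (step S) a b ∨
        (ReflTransGen (step S) a u ∧ ReflTransGen (step S) v b) := by
  constructor
  · intro h
    induction h with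
    | refl => exact Or.inl ReflTransGen.refl
    | tail h1 h2 ih =>
        rw [addEdge_step_iff hu hv] at h2
        rcases ih with ih | ⟨ihu, ihv⟩
        · rcases h2 with h2 | ⟨rfl, rfl⟩
          · exact Or.inl (ReflTransGen.tail ih h2)
          · exact Or.inr ⟨ih, ReflTransGen.refl⟩
        · rcases h2 with h2 | ⟨rfl, rfl⟩
          · exact Or.inr ⟨ihu, ReflTransGen.tail ihv h2⟩
          · exact Or.inr ⟨ihu, ReflTransGen.refl⟩
  · rintro (h | ⟨h1, h2⟩)
    · exact rtg_mono hu hv h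
    · refine ReflTransGen.trans (rtg_mono hu hv h1) ?_
      refine ReflTransGen.head ?_ (rtg_mono hu hv h2)
      rw [step, addEdge_next_self]

include hu in
lemma addEdge_iter_mono {n : ℕ} {a w : V} (h : iterNext S n a = some w) :
    iterNext (addEdge S u v hv) n a = some w := by
  induction n generalizing w with
  | zero => exact h
  | succ n ih =>
      rw [iterNext_succ] at h ⊢
      obtain ⟨y, hy, hyw⟩ := Option.bind_eq_some_iff.mp h
      rw [ih hy]
      exact step_mono hu hv hyw

include hu in
lemma addEdge_cyclic_mono {x : V} (h : IsCyclicVert S x) :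
    IsCyclicVert (addEdge S u v hv) x := by
  obtain ⟨k, hk, hit⟩ := h
  exact ⟨k, hk, addEdge_iter_mono hu hv hit⟩

include hu hv in
lemma addEdge_cyclic_iff (x : V) :
    IsCyclicVert (addEdge S u v hv) x ↔
      IsCyclicVert S x ∨ (ReflTransGen (step S) v u ∧ ReflTransGen (step S) x u) := by
  constructor
  · intro h
    rw [cyclic_iff_transGen] at h
    obtain ⟨y, hy, hyx⟩ := TransGen.head'_iff.mp h
    rw [addEdge_step_iff hu hv] at hy
    rw [addEdge_rtg_iff hu hv] at hyx
    rcases hy with hy | ⟨rfl, rfl⟩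
    · rcases hyx with hyx | ⟨hyu, hvx⟩
      · exact Or.inl ((cyclic_iff_transGen S x).mpr (TransGen.head' hy hyx))
      · have hxu : ReflTransGen (step S) x u := ReflTransGen.head hy hyu
        exact Or.inr ⟨ReflTransGen.trans hvx hxu, hxu⟩
    · rcases hyx with hyx | ⟨_, hyx⟩ <;>
        exact Or.inr ⟨hyx, ReflTransGen.refl⟩
  · rintro (h | ⟨hvu, hxu⟩)
    · exact addEdge_cyclic_mono hu hv h
    · rcases rtg_comparable S hxu hvu with hxv | hvx
      · -- x reaches v ; but v is a start so x = v
        have hxv' : x = v := rtg_start_absorb S hv hxv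
        subst hxv'
        rw [cyclic_iff_transGen]
        exact TransGen.tail' (rtg_mono hu hv hvu) (by rw [step, addEdge_next_self])
      · rw [cyclic_iff_transGen]
        have t1 : TransGen (step (addEdge S u v hv)) x v :=
          TransGen.tail' (rtg_mono hu hv hxu) (by rw [step, addEdge_next_self])
        exact TransGen.trans_left t1 (rtg_mono hu hv hvx)

include hu in
lemma addEdge_join_iff (a b : V) :
    Join (ReflTransGen (step (addEdge S u v hv))) a b ↔
      Join (ReflTransGen (step S)) a b ∨
      (ReflTransGen (step S) a u ∧ Join (ReflTransGen (step S)) b v) ∨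
      (ReflTransGen (step S) b u ∧ Join (ReflTransGen (step S)) a v) := by
  constructor
  · rintro ⟨w, hA, hB⟩
    rw [addEdge_rtg_iff hu hv] at hA hB
    rcases hA with hA | ⟨hA1, hA2⟩
    · rcases hB with hB | ⟨hB1, hB2⟩
      · exact Or.inl ⟨w, hA, hB⟩
      · exact Or.inr (Or.inr ⟨hB1, ⟨w, hA, hB2⟩⟩)
    · rcases hB with hB | ⟨hB1, hB2⟩
      · exact Or.inr (Or.inl ⟨hA1, ⟨w, hB, hA2⟩⟩)
      · exact Or.inl ⟨u, hA1, hB1⟩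
  · rintro (⟨w, h1, h2⟩ | ⟨hau, ⟨w, hbw, hvw⟩⟩ | ⟨hbu, ⟨w, haw, hvw⟩⟩)
    · exact ⟨w, rtg_mono hu hv h1, rtg_mono hu hv h2⟩
    · exact ⟨w, (addEdge_rtg_iff hu hv a w).mpr (Or.inr ⟨hau, hvw⟩), rtg_mono hu hv hbw⟩
    · exact ⟨w, rtg_mono hu hv haw, (addEdge_rtg_iff hu hv b w).mpr (Or.inr ⟨hbu, hvw⟩)⟩

lemma addEdge_ends : ends (addEdge S u v hv) = (ends S).erase u := by
  ext w
  simp only [ends, Finset.mem_erase, Finset.mem_filter, Finset.mem_univ, true_and]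
  by_cases h : w = u
  · subst h
    rw [addEdge_next_self]
    simp
  · rw [addEdge_next_ne hv h]
    simp [h]

include hu in
lemma addEdge_supp : supp (addEdge S u v hv) = insert u (supp S) := by
  ext w
  simp only [supp, Finset.mem_insert, Finset.mem_filter, Finset.mem_univ, true_and]
  by_cases h : w = u
  · subst h
    rw [addEdge_next_self]
    simp
  · rw [addEdge_next_ne hv h]
    simp [h]

include hu in
lemma addEdge_card_supp : (supp (addEdge S u v hv)).card = (supp S).card + 1 := by
  rw [addEdge_supp hu hv, Finset.card_insert_of_notMem]
  simp [supp, hu]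

include hu in
lemma blockOf_addEdge_of_cyclic {x : V} (hx : IsCyclicVert S x) :
    blockOf (addEdge S u v hv) x = blockOf S x := by
  ext b
  rw [mem_blockOf, mem_blockOf, connRel_iff_join, connRel_iff_join, addEdge_join_iff hu hv]
  constructor
  · rintro (h | ⟨hxu, _⟩ | ⟨_, hxv⟩)
    · exact h
    · exfalso
      have := (cyclic_rtg_forward S hx hxu).1
      exact not_isEnd_of_cyclic S this hu
    · exfalso
      have hconn : connRel S x v := (connRel_iff_join S x v).mpr hxv
      have : IsCyclicVert S v := (cyclic_congr_of_connRel S hconn).mp hx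
      exact not_isStart_of_cyclic S this hv
  · exact Or.inl

lemma mem_cycBlocks_iff (T : PCC E) (b : Finset V) :
    b ∈ cycBlocks T ↔ ∃ x, IsCyclicVert T x ∧ b = blockOf T x := by
  rw [cycBlocks, Finset.mem_filter]
  constructor
  · rintro ⟨hb, x, hxb, hx⟩
    rw [blocks, Finset.mem_image] at hb
    obtain ⟨y, _, rfl⟩ := hb
    rw [mem_blockOf] at hxb
    exact ⟨x, hx, blockOf_eq_of_connRel T hxb⟩
  · rintro ⟨x, hx, rfl⟩
    exact ⟨blockOf_mem_blocks T x, x, blockOf_self T x, hx⟩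

include hu in
lemma addEdge_cycBlocks_of_not (hnot : ¬ ReflTransGen (step S) v u) :
    cycBlocks (addEdge S u v hv) = cycBlocks S := by
  ext b
  rw [mem_cycBlocks_iff, mem_cycBlocks_iff]
  constructor
  · rintro ⟨x, hx, rfl⟩
    rw [addEdge_cyclic_iff hu hv] at hx
    rcases hx with hx | ⟨hvu, _⟩
    · exact ⟨x, hx, blockOf_addEdge_of_cyclic hu hv hx⟩
    · exact absurd hvu hnot
  · rintro ⟨x, hx, rfl⟩
    refine ⟨x, (addEdge_cyclic_iff hu hv x).mpr (Or.inl hx), ?_⟩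
    rw [blockOf_addEdge_of_cyclic hu hv hx]

include hu in
lemma addEdge_cycBlocks_of (hvu : ReflTransGen (step S) v u) :
    cycBlocks (addEdge S u v hv) = insert (blockOf (addEdge S u v hv) u) (cycBlocks S) := by
  ext b
  rw [mem_cycBlocks_iff, Finset.mem_insert, mem_cycBlocks_iff]
  constructor
  · rintro ⟨x, hx, rfl⟩
    rw [addEdge_cyclic_iff hu hv] at hx
    rcases hx with hx | ⟨_, hxu⟩
    · exact Or.inr ⟨x, hx, blockOf_addEdge_of_cyclic hu hv hx⟩
    · left
      have hconn : connRel (addEdge S u v hv) x u :=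
        (connRel_iff_join _ x u).mpr ⟨u, rtg_mono hu hv hxu, ReflTransGen.refl⟩
      exact blockOf_eq_of_connRel _ hconn
  · rintro (rfl | ⟨x, hx, rfl⟩)
    · exact ⟨u, (addEdge_cyclic_iff hu hv u).mpr (Or.inr ⟨hvu, ReflTransGen.refl⟩), rfl⟩
    · refine ⟨x, (addEdge_cyclic_iff hu hv x).mpr (Or.inl hx), ?_⟩
      rw [blockOf_addEdge_of_cyclic hu hv hx]

include hu in
lemma addEdge_blockOf_u_not_mem (hvu : ReflTransGen (step S) v u) :
    blockOf (addEdge S u v hv) u ∉ cycBlocks S := by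
  intro hmem
  rw [mem_cycBlocks_iff] at hmem
  obtain ⟨x, hx, heq⟩ := hmem
  have hu_mem : u ∈ blockOf S x := heq ▸ blockOf_self (addEdge S u v hv) u
  rw [mem_blockOf] at hu_mem
  have : IsCyclicVert S u := (cyclic_congr_of_connRel S hu_mem).mp hx
  exact not_isEnd_of_cyclic S this hu

include hu in
lemma addEdge_card_cycBlocks :
    (cycBlocks (addEdge S u v hv)).card =
      (cycBlocks S).card + (if ReflTransGen (step S) v u then 1 else 0) := by
  by_cases h : ReflTransGen (step S) v u
  · rw [if_pos h, addEdge_cycBlocks_of hu hv h,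
      Finset.card_insert_of_notMem (addEdge_blockOf_u_not_mem hu hv h)]
  · rw [if_neg h, addEdge_cycBlocks_of_not hu hv h]
    omega

end AddEdge

end PCC

/-- The path-cycle symmetric function `Ξ_D(x;y)` of the digraph with vertex set `V` and
edge set `E`, as a formal power series in two countable families of variables
(the `x`-variables are indexed by `Sum.inl`, the `y`-variables by `Sum.inr`). -/
def Xi {V : Type*} [Fintype V] [DecidableEq V] (E : Finset (V × V)) :
    MvPowerSeries (ℕ ⊕ ℕ) ℚ :=
  ∑ S : PCC E, maugP xVar (PCC.pathType S) * ppP yVar (PCC.cycleType S)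

/-- The falling factorial `t(t-1)⋯(t-k+1)`. -/
def ffall {A : Type*} [CommRing A] (t : A) (k : ℕ) : A :=
  ∏ m ∈ Finset.range k, (t - (m : A))

/-- The cover polynomial `C(D; i, j) = ∑_S i^{\underline{ℓ(π(S))}} j^{ℓ(σ(S))}` of a
digraph, as a polynomial in the two variables `i = X 0` and `j = X 1`. -/
def coverPoly {V : Type*} [Fintype V] [DecidableEq V] (E : Finset (V × V)) :
    MvPolynomial (Fin 2) ℚ :=
  ∑ S : PCC E, ffall (MvPolynomial.X 0) (Multiset.card (PCC.pathType S)) *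
    MvPolynomial.X 1 ^ Multiset.card (PCC.cycleType S)

lemma ffall_succ {A : Type*} [CommRing A] (t : A) (k : ℕ) :
    ffall t (k+1) = ffall t k * (t - (k : A)) := by
  rw [ffall, ffall, Finset.prod_range_succ]

namespace PCC

open MvPolynomial

variable {V : Type*} [Fintype V] [DecidableEq V]

/-- weight of a cover -/
def wgt {E : Finset (V × V)} (S : PCC E) : MvPolynomial (Fin 2) ℚ :=
  ffall (X 0) (Multiset.card (pathType S)) * X 1 ^ (Multiset.card (cycleType S))

lemma extSum (n : ℕ) : ∀ (g : PCC (univ : Finset (V × V))) (D : Finset V),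
    D ⊆ ends g → (ends g).card - D.card = n →
    (∑ f : PCC (univ : Finset (V × V)),
      if (∀ w x, g.next w = some x → f.next w = some x) ∧ (∀ e ∈ D, f.next e = none)
        then wgt f else 0)
      = X 1 ^ (Multiset.card (cycleType g)) * ffall (X 0) D.card *
        ∏ m ∈ Finset.range n, (X 0 + X 1 + (m : MvPolynomial (Fin 2) ℚ)) := by
  induction n with
  | zero =>
    intro g D hsub hcard
    have hle : D.card ≤ (ends g).card := Finset.card_le_card hsub
    have hDends : D = ends g := Finset.eq_of_subset_of_card_le hsub (by omega)
    have hkey : ∀ f : PCC (univ : Finset (V × V)),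
        ((∀ w x, g.next w = some x → f.next w = some x) ∧ (∀ e ∈ D, f.next e = none))
          ↔ f = g := by
      intro f
      constructor
      · rintro ⟨h1, h2⟩
        apply pcc_ext
        funext w
        cases hw : g.next w with
        | none =>
            have hwD : w ∈ D := by rw [hDends, mem_ends]; exact hw
            rw [h2 w hwD]
        | some x => rw [h1 w x hw]
      · rintro rfl
        exact ⟨fun w x h => h, fun e he => by
          have := hsub he
          rw [mem_ends] at this
          exact this⟩
    have : (∑ f : PCC (univ : Finset (V × V)),
        if (∀ w x, g.next w = some x → f.next w = some x) ∧ (∀ e ∈ D, f.next e = none)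
          then wgt f else 0)
        = ∑ f : PCC (univ : Finset (V × V)), if f = g then wgt f else 0 := by
      apply Finset.sum_congr rfl
      intro f _
      rw [if_congr (hkey f) rfl rfl]
    rw [this, Finset.sum_ite_eq' Finset.univ g wgt, if_pos (Finset.mem_univ g)]
    have hπ : Multiset.card (pathType g) = D.card := by
      rw [card_pathType, card_pathBlocks, ← hDends]
    rw [wgt, hπ]
    simp only [Finset.range_zero, Finset.prod_empty, mul_one]
    ring
  | succ n ih =>
    intro g D hsub hcard
    have hle : D.card ≤ (ends g).card := Finset.card_le_card hsub
    have hlt : D.card < (ends g).card := by omega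
    have hne : (ends g \ D).Nonempty := by
      rw [← Finset.card_pos, Finset.card_sdiff_of_subset hsub]
      omega
    obtain ⟨e₀, he₀mem⟩ := hne
    rw [Finset.mem_sdiff] at he₀mem
    obtain ⟨he₀ends, he₀D⟩ := he₀mem
    have he₀ : g.next e₀ = none := (mem_ends g e₀).mp he₀ends
    -- pointwise splitting of the sum according to the value of `f.next e₀`
    have split : ∀ f : PCC (univ : Finset (V × V)),
        (if (∀ w x, g.next w = some x → f.next w = some x) ∧ (∀ e ∈ D, f.next e = none)
          then wgt f else 0)
        = (if (∀ w x, g.next w = some x → f.next w = some x) ∧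
              (∀ e ∈ insert e₀ D, f.next e = none) then wgt f else 0)
          + ∑ s : V, (if (∀ w x, g.next w = some x → f.next w = some x) ∧
              (∀ e ∈ D, f.next e = none) ∧ f.next e₀ = some s then wgt f else 0) := by
      intro f
      by_cases hc : (∀ w x, g.next w = some x → f.next w = some x) ∧
          (∀ e ∈ D, f.next e = none)
      · cases hfe : f.next e₀ with
        | none =>
            rw [if_pos hc, if_pos ⟨hc.1, by
              intro e he
              rcases Finset.mem_insert.mp he with rfl | he
              · exact hfe
              · exact hc.2 e he⟩]
            rw [Finset.sum_eq_zero (fun s _ => by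
              rw [if_neg]
              rintro ⟨-, -, h⟩
              cases h)]
            simp
        | some s₀ =>
            rw [if_pos hc, if_neg (by
              rintro ⟨-, hall⟩
              have := hall e₀ (Finset.mem_insert_self _ _)
              rw [hfe] at this
              cases this)]
            rw [Finset.sum_eq_single s₀ (fun s _ hne => by
                rw [if_neg]
                rintro ⟨-, -, h⟩
                exact hne (Option.some_injective _ h).symm)
              (fun habs => absurd (Finset.mem_univ s₀) habs)]
            rw [if_pos ⟨hc.1, hc.2, rfl⟩]
            simp
      · rw [if_neg hc, if_neg (by
          rintro ⟨h1, h2⟩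
          exact hc ⟨h1, fun e he => h2 e (Finset.mem_insert_of_mem he)⟩)]
        rw [Finset.sum_eq_zero (fun s _ => by
          rw [if_neg]
          rintro ⟨h1, h2, -⟩
          exact hc ⟨h1, h2⟩)]
        simp
    rw [Finset.sum_congr rfl (fun f _ => split f), Finset.sum_add_distrib, Finset.sum_comm]
    -- first summand : apply IH with D' = insert e₀ D
    have hsub' : insert e₀ D ⊆ ends g := Finset.insert_subset he₀ends hsub
    have hcardins : (insert e₀ D).card = D.card + 1 := Finset.card_insert_of_notMem he₀D
    have T1 := ih g (insert e₀ D) hsub' (by omega)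
    rw [hcardins] at T1
    rw [T1]
    -- second summand : per s computation
    have inner : ∀ s : V,
        (∑ f : PCC (univ : Finset (V × V)),
          if (∀ w x, g.next w = some x → f.next w = some x) ∧
              (∀ e ∈ D, f.next e = none) ∧ f.next e₀ = some s then wgt f else 0)
        = if hs : IsStart g s then
            (X 1 ^ (Multiset.card (cycleType g) +
                (if ReflTransGen (step g) s e₀ then 1 else 0)) * ffall (X 0) D.card *
              ∏ m ∈ Finset.range n, (X 0 + X 1 + (m : MvPolynomial (Fin 2) ℚ)))
          else 0 := by
      intro s
      by_cases hs : IsStart g s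
      · rw [dif_pos hs]
        have hs : ∀ w, g.next w ≠ some s := hs
        set g' := addEdge g e₀ s hs with hg'
        have hequiv : ∀ f : PCC (univ : Finset (V × V)),
            ((∀ w x, g.next w = some x → f.next w = some x) ∧
              (∀ e ∈ D, f.next e = none) ∧ f.next e₀ = some s)
            ↔ ((∀ w x, g'.next w = some x → f.next w = some x) ∧
              (∀ e ∈ D, f.next e = none)) := by
          intro f
          constructor
          · rintro ⟨h1, h2, h3⟩
            refine ⟨?_, h2⟩
            intro w x hw
            by_cases hwe : w = e₀
            · subst hwe
              rw [hg', addEdge_next_self] at hw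
              cases hw
              exact h3
            · rw [hg', addEdge_next_ne hs hwe] at hw
              exact h1 w x hw
          · rintro ⟨h1, h2⟩
            refine ⟨?_, h2, ?_⟩
            · intro w x hw
              have hwe : w ≠ e₀ := by
                rintro rfl
                rw [he₀] at hw
                cases hw
              exact h1 w x (by rw [hg', addEdge_next_ne hs hwe]; exact hw)
            · exact h1 e₀ s (by rw [hg', addEdge_next_self])
        rw [Finset.sum_congr rfl (fun f _ => by rw [if_congr (hequiv f) rfl rfl])]
        have hsub'' : D ⊆ ends g' := by
          intro e he
          rw [hg', addEdge_ends, Finset.mem_erase]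
          exact ⟨fun h => he₀D (h ▸ he), hsub he⟩
        have hcards : (ends g').card = (ends g).card - 1 := by
          rw [hg', addEdge_ends, Finset.card_erase_of_mem he₀ends]
        have := ih g' D hsub'' (by omega)
        rw [this]
        have hcyc : Multiset.card (cycleType g') = Multiset.card (cycleType g) +
            (if ReflTransGen (step g) s e₀ then 1 else 0) := by
          rw [card_cycleType, card_cycleType, hg', addEdge_card_cycBlocks he₀ hs]
        rw [hcyc]
      · rw [dif_neg hs]
        apply Finset.sum_eq_zero
        intro f _
        rw [if_neg]
        rintro ⟨h1, -, h3⟩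
        rw [IsStart] at hs
        push_neg at hs
        obtain ⟨w₀, hw₀⟩ := hs
        have hfw₀ : f.next w₀ = some s := h1 w₀ s hw₀
        have : w₀ = e₀ := f.inj w₀ e₀ s hfw₀ h3
        rw [this, he₀] at hw₀
        cases hw₀
    rw [Finset.sum_congr rfl (fun s _ => inner s)]
    -- now sum over s
    obtain ⟨sstar, hsstar, huniq⟩ := exists_unique_start_rtg g ((mem_ends g e₀).mp he₀ends)
    set c := Multiset.card (cycleType g) with hc
    set Q := ∏ m ∈ Finset.range n, (X 0 + X 1 + (m : MvPolynomial (Fin 2) ℚ)) with hQ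
    set B : MvPolynomial (Fin 2) ℚ := X 1 ^ c * ffall (X 0) D.card * Q with hB
    set A : MvPolynomial (Fin 2) ℚ := X 1 ^ (c+1) * ffall (X 0) D.card * Q with hA
    have hsum2 : (∑ s : V, if hs : IsStart g s then
          (X 1 ^ (c + (if ReflTransGen (step g) s e₀ then 1 else 0)) * ffall (X 0) D.card * Q)
        else 0)
        = ((starts g).card : MvPolynomial (Fin 2) ℚ) * B + (A - B) := by
      have step1 : ∀ s : V, (if hs : IsStart g s then
            (X 1 ^ (c + (if ReflTransGen (step g) s e₀ then 1 else 0)) * ffall (X 0) D.card * Q)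
          else 0)
          = if s ∈ starts g then (B + if s = sstar then A - B else 0) else 0 := by
        intro s
        by_cases hs : IsStart g s
        · rw [dif_pos hs, if_pos ((mem_starts g s).mpr hs)]
          by_cases hrtg : ReflTransGen (step g) s e₀
          · have hseq : s = sstar := huniq s ⟨hs, hrtg⟩
            rw [if_pos hrtg, if_pos hseq]
            ring
          · have hsne : s ≠ sstar := by
              rintro rfl
              exact hrtg hsstar.2
            rw [if_neg hrtg, if_neg hsne]
            ring
        · rw [dif_neg hs, if_neg (fun h => hs ((mem_starts g s).mp h))]
      rw [Finset.sum_congr rfl (fun s _ => step1 s), Finset.sum_ite_mem,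
        Finset.univ_inter, Finset.sum_add_distrib, Finset.sum_const,
        Finset.sum_ite_eq' (starts g) sstar (fun _ => A - B),
        if_pos ((mem_starts g sstar).mpr hsstar.1), nsmul_eq_mul]
    rw [hsum2]
    have hstartscard : (starts g).card = (ends g).card := by
      rw [card_starts, card_ends]
    have hp : (starts g).card = n + 1 + D.card := by omega
    rw [Finset.prod_range_succ, ← hQ, ffall_succ, hp, hB, hA]
    push_cast
    ring


lemma wgt_congr {E' : Finset (V × V)} {E : Finset (V × V)} (S : PCC E) (T : PCC E')
    (h : S.next = T.next) : wgt S = wgt T := by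
  rw [wgt, wgt, pathType_congr S T h, cycleType_congr S T h]

/-- the restriction of a cover to a subset of its edges -/
def restrict (f : PCC (univ : Finset (V × V))) (T : Finset (V × V)) :
    PCC (univ : Finset (V × V)) where
  next w := if h : (∃ x, f.next w = some x ∧ (w, x) ∈ T) then f.next w else none
  mem_edges := fun _ _ _ => Finset.mem_univ _
  inj := by
    intro w w' x hw hw'
    by_cases h1 : (∃ x, f.next w = some x ∧ (w, x) ∈ T)
    · rw [dif_pos h1] at hw
      by_cases h2 : (∃ x, f.next w' = some x ∧ (w', x) ∈ T)
      · rw [dif_pos h2] at hw'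
        exact f.inj _ _ _ hw hw'
      · rw [dif_neg h2] at hw'
        cases hw'
    · rw [dif_neg h1] at hw
      cases hw

lemma restrict_le (f : PCC (univ : Finset (V × V))) (T : Finset (V × V)) {w x : V}
    (h : (restrict f T).next w = some x) : f.next w = some x := by
  by_cases h1 : (∃ x, f.next w = some x ∧ (w, x) ∈ T)
  · rw [show (restrict f T).next w = f.next w from dif_pos h1] at h
    exact h
  · rw [show (restrict f T).next w = none from dif_neg h1] at h
    cases h

lemma mem_edg (f : PCC (univ : Finset (V × V))) (p : V × V) :
    p ∈ edg f ↔ f.next p.1 = some p.2 := by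
  simp [edg]

lemma edg_restrict (f : PCC (univ : Finset (V × V))) {T : Finset (V × V)}
    (hT : T ⊆ edg f) : edg (restrict f T) = T := by
  ext ⟨u, x⟩
  rw [mem_edg]
  constructor
  · intro h
    by_cases h1 : (∃ x, f.next u = some x ∧ (u, x) ∈ T)
    · rw [show (restrict f T).next u = f.next u from dif_pos h1] at h
      obtain ⟨x', hx', hTm⟩ := h1
      rw [h] at hx'
      cases hx'
      exact hTm
    · rw [show (restrict f T).next u = none from dif_neg h1] at h
      cases h
  · intro h
    have hf : f.next u = some x := (mem_edg f (u, x)).mp (hT h)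
    rw [show (restrict f T).next u = f.next u from dif_pos ⟨x, hf, h⟩]
    exact hf

lemma restrict_edg (g f : PCC (univ : Finset (V × V)))
    (hle : ∀ w x, g.next w = some x → f.next w = some x) : restrict f (edg g) = g := by
  apply pcc_ext
  funext w
  cases hw : g.next w with
  | none =>
      rw [show (restrict f (edg g)).next w = none from dif_neg ?_]
      rintro ⟨x', _, hT⟩
      rw [mem_edg] at hT
      rw [hw] at hT
      cases hT
  | some x =>
      have hf : f.next w = some x := hle w x hw
      rw [show (restrict f (edg g)).next w = f.next w from
        dif_pos ⟨x, hf, (mem_edg g (w, x)).mpr hw⟩]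
      rw [hf]

open MvPolynomial in
lemma coverPoly_sum (E₀ : Finset (V × V)) :
    (∑ S : PCC E₀, wgt S)
      = ∑ f ∈ Finset.univ.filter (fun f : PCC (univ : Finset (V × V)) => edg f ⊆ E₀),
          wgt f := by
  refine Finset.sum_bij'
    (fun (S : PCC E₀) _ => (⟨S.next, fun _ _ _ => Finset.mem_univ _, S.inj⟩ :
      PCC (univ : Finset (V × V))))
    (fun f hf => (⟨f.next, fun u x h => (Finset.mem_filter.mp hf).2
        ((mem_edg f (u, x)).mpr h), f.inj⟩ : PCC E₀))
    ?_ ?_ ?_ ?_ ?_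
  · intro S _
    rw [Finset.mem_filter]
    refine ⟨Finset.mem_univ _, ?_⟩
    intro p hp
    rw [mem_edg] at hp
    exact S.mem_edges p.1 p.2 hp
  · intro f _
    exact Finset.mem_univ _
  · intro S _
    exact pcc_ext rfl
  · intro f _
    exact pcc_ext rfl
  · intro S _
    exact wgt_congr _ _ rfl


open MvPolynomial in
lemma inner_ext_sum (g : PCC (univ : Finset (V × V))) :
    (∑ f ∈ Finset.univ.filter
        (fun f : PCC (univ : Finset (V × V)) =>
          ∀ w x, g.next w = some x → f.next w = some x), wgt f)
      = X 1 ^ (Multiset.card (cycleType g)) *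
          ∏ m ∈ Finset.range ((ends g).card), (X 0 + X 1 + (m : MvPolynomial (Fin 2) ℚ)) := by
  rw [Finset.sum_filter]
  have h := extSum ((ends g).card) g ∅ (Finset.empty_subset _) (by simp)
  rw [Finset.card_empty] at h
  have hcongr : ∀ f : PCC (univ : Finset (V × V)),
      (if (∀ w x, g.next w = some x → f.next w = some x) then wgt f else 0)
      = (if (∀ w x, g.next w = some x → f.next w = some x) ∧
          (∀ e ∈ (∅ : Finset V), f.next e = none) then wgt f else 0) := by
    intro f
    apply if_congr _ rfl rfl
    simp
  rw [Finset.sum_congr rfl (fun f _ => hcongr f), h]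
  rw [show ffall (X 0 : MvPolynomial (Fin 2) ℚ) 0 = 1 from Finset.prod_range_zero _]
  rw [mul_one]

end PCC

lemma neg_one_powerset_sum {α : Type*} [DecidableEq α] (s : Finset α) :
    (∑ T ∈ s.powerset, (-1 : MvPolynomial (Fin 2) ℚ) ^ T.card)
      = if s = ∅ then 1 else 0 := by
  have h := Finset.sum_powerset_neg_one_pow_card (x := s)
  have h2 := congrArg (fun z : ℤ => ((z : MvPolynomial (Fin 2) ℚ))) h
  push_cast at h2
  exact h2

lemma neg_one_pow_sub {p d : ℕ} (h : p ≤ d) :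
    ((-1 : MvPolynomial (Fin 2) ℚ)) ^ (d - p)
      = (-1) ^ d * (-1) ^ p := by
  rw [← pow_add]
  have h2 : d + p = (d - p) + 2 * p := by omega
  rw [h2, pow_add, pow_mul]
  norm_num

open MvPolynomial in
lemma aeval_ffall (v : Fin 2 → MvPolynomial (Fin 2) ℚ) (t : MvPolynomial (Fin 2) ℚ)
    (k : ℕ) : aeval v (ffall t k) = ffall (aeval v t) k := by
  rw [ffall, ffall, map_prod]
  apply Finset.prod_congr rfl
  intro m _
  rw [map_sub, map_natCast]

open MvPolynomial in
lemma ffall_neg_sub (k : ℕ) :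
    ffall (-X 0 - X 1 : MvPolynomial (Fin 2) ℚ) k
      = (-1) ^ k * ∏ m ∈ Finset.range k, (X 0 + X 1 + (m : MvPolynomial (Fin 2) ℚ)) := by
  rw [ffall]
  rw [show (∏ m ∈ Finset.range k, (-X 0 - X 1 - (m : MvPolynomial (Fin 2) ℚ)))
      = ∏ m ∈ Finset.range k, (-1) * (X 0 + X 1 + (m : MvPolynomial (Fin 2) ℚ)) from
    Finset.prod_congr rfl (fun m _ => by ring)]
  rw [Finset.prod_mul_distrib, Finset.prod_const, Finset.card_range]

open MvPolynomial PCC in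
theorem cover_polynomial_reciprocity_aux {V : Type*} [Fintype V] [DecidableEq V]
    (E : Finset (V × V)) :
    coverPoly ((Finset.univ : Finset (V × V)) \ E) =
      (-1 : ℚ) ^ Fintype.card V •
        MvPolynomial.aeval
          ![-MvPolynomial.X 0 - MvPolynomial.X 1, MvPolynomial.X 1] (coverPoly E) := by
  classical
  set d := Fintype.card V with hd
  -- two sides as sums over partial injections with constrained edge sets
  have hcov : ∀ E₀ : Finset (V × V), coverPoly E₀ =
      ∑ f ∈ Finset.univ.filter (fun f : PCC (univ : Finset (V × V)) => edg f ⊆ E₀),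
        wgt f := by
    intro E₀
    rw [← coverPoly_sum]
    rfl
  -- compute the right-hand side
  have haevalX0 : aeval (![-X 0 - X 1, X 1] : Fin 2 → MvPolynomial (Fin 2) ℚ)
      (X 0 : MvPolynomial (Fin 2) ℚ) = -X 0 - X 1 := by
    rw [aeval_X]; rfl
  have haevalX1 : aeval (![-X 0 - X 1, X 1] : Fin 2 → MvPolynomial (Fin 2) ℚ)
      (X 1 : MvPolynomial (Fin 2) ℚ) = X 1 := by
    rw [aeval_X]; rfl
  have hRHS : (-1 : ℚ) ^ d • aeval
        (![-X 0 - X 1, X 1] : Fin 2 → MvPolynomial (Fin 2) ℚ) (coverPoly E)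
      = ∑ g ∈ Finset.univ.filter (fun g : PCC (univ : Finset (V × V)) => edg g ⊆ E),
          (-1 : MvPolynomial (Fin 2) ℚ) ^ d * ((-1) ^ ((ends g).card) *
            ∏ m ∈ Finset.range ((ends g).card), (X 0 + X 1 + (m : MvPolynomial (Fin 2) ℚ)))
            * X 1 ^ (Multiset.card (cycleType g)) := by
    rw [hcov E, map_sum, smul_eq_C_mul, map_pow, map_neg, map_one, Finset.mul_sum]
    apply Finset.sum_congr rfl
    intro g _
    rw [wgt, map_mul, map_pow, haevalX1, aeval_ffall, haevalX0]
    rw [show Multiset.card (pathType g) = (ends g).card by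
      rw [card_pathType, card_pathBlocks]]
    rw [ffall_neg_sub]
    ring
  rw [hRHS, hcov]
  -- inclusion–exclusion on the left-hand side
  have hfilter : Finset.univ.filter
        (fun f : PCC (univ : Finset (V × V)) => edg f ⊆ Finset.univ \ E)
      = Finset.univ.filter
        (fun f : PCC (univ : Finset (V × V)) => edg f ∩ E = ∅) := by
    apply Finset.filter_congr
    intro f _
    rw [Finset.subset_sdiff]
    simp only [Finset.subset_univ, true_and]
    rw [← Finset.disjoint_iff_inter_eq_empty]
  rw [hfilter, Finset.sum_filter]
  have hie : ∀ f : PCC (univ : Finset (V × V)),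
      (if edg f ∩ E = ∅ then wgt f else 0)
      = ∑ T ∈ (edg f ∩ E).powerset, (-1 : MvPolynomial (Fin 2) ℚ) ^ T.card * wgt f := by
    intro f
    rw [← Finset.sum_mul, neg_one_powerset_sum, ite_mul, one_mul, zero_mul]
  rw [Finset.sum_congr rfl (fun f _ => hie f)]
  -- swap the double sum
  rw [Finset.sum_sigma']
  have hswap : (∑ p ∈ (Finset.univ : Finset (PCC (univ : Finset (V × V)))).sigma
        (fun f => (edg f ∩ E).powerset),
        (-1 : MvPolynomial (Fin 2) ℚ) ^ p.2.card * wgt p.1)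
      = ∑ q ∈ (Finset.univ.filter
          (fun g : PCC (univ : Finset (V × V)) => edg g ⊆ E)).sigma
          (fun g => Finset.univ.filter
            (fun f : PCC (univ : Finset (V × V)) =>
              ∀ w x, g.next w = some x → f.next w = some x)),
        (-1 : MvPolynomial (Fin 2) ℚ) ^ (edg q.1).card * wgt q.2 := by
    refine Finset.sum_bij'
      (fun p _ => ⟨restrict p.1 p.2, p.1⟩)
      (fun q _ => ⟨q.2, edg q.1⟩) ?_ ?_ ?_ ?_ ?_
    · rintro ⟨f, T⟩ hp
      rw [Finset.mem_sigma, Finset.mem_powerset] at hp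
      have hT : T ⊆ edg f := hp.2.trans (Finset.inter_subset_left)
      rw [Finset.mem_sigma, Finset.mem_filter, Finset.mem_filter]
      refine ⟨⟨Finset.mem_univ _, ?_⟩, Finset.mem_univ _, ?_⟩
      · rw [edg_restrict f hT]
        exact hp.2.trans (Finset.inter_subset_right)
      · intro w x h
        exact restrict_le f T h
    · rintro ⟨g, f⟩ hq
      rw [Finset.mem_sigma, Finset.mem_filter, Finset.mem_filter] at hq
      dsimp only at hq ⊢
      rw [Finset.mem_sigma, Finset.mem_powerset]
      refine ⟨Finset.mem_univ _, ?_⟩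
      intro p hp
      rw [Finset.mem_inter]
      constructor
      · rw [mem_edg]
        exact hq.2.2 p.1 p.2 ((mem_edg g p).mp hp)
      · exact hq.1.2 hp
    · rintro ⟨f, T⟩ hp
      rw [Finset.mem_sigma, Finset.mem_powerset] at hp
      have hT : T ⊆ edg f := hp.2.trans (Finset.inter_subset_left)
      exact Sigma.ext rfl (heq_of_eq (edg_restrict f hT))
    · rintro ⟨g, f⟩ hq
      rw [Finset.mem_sigma, Finset.mem_filter, Finset.mem_filter] at hq
      dsimp only at hq
      exact Sigma.ext (restrict_edg g f hq.2.2) (heq_of_eq rfl)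
    · rintro ⟨f, T⟩ hp
      rw [Finset.mem_sigma, Finset.mem_powerset] at hp
      have hT : T ⊆ edg f := hp.2.trans (Finset.inter_subset_left)
      rw [edg_restrict f hT]
  rw [hswap, Finset.sum_sigma]
  -- evaluate the inner sums and match the terms
  apply Finset.sum_congr rfl
  intro g hg
  dsimp only
  rw [← Finset.mul_sum, inner_ext_sum g]
  have h1 : (edg g).card = (supp g).card := card_edg g
  have h2 : (ends g).card = d - (supp g).card := card_ends g
  have h3 : (supp g).card ≤ d := card_supp_le g
  have h4 : (edg g).card = d - (ends g).card := by omega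
  have h5 : (ends g).card ≤ d := by omega
  rw [h4, neg_one_pow_sub h5]
  ring

/-- If `D` is a digraph with `d` vertices then `C(D'; i, j) = (-1)^d C(D; -i-j, j)` as an
identity of polynomials in `i` and `j`, where `D'` is the complement digraph. -/
theorem cover_polynomial_reciprocity {V : Type*} [Fintype V] [DecidableEq V]
    (E : Finset (V × V)) :
    coverPoly ((Finset.univ : Finset (V × V)) \ E) =
      (-1 : ℚ) ^ Fintype.card V •
        MvPolynomial.aeval
          ![-MvPolynomial.X 0 - MvPolynomial.X 1, MvPolynomial.X 1] (coverPoly E) :=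
  cover_polynomial_reciprocity_aux E
end
end

section
/- Let B ⊆ [d]×[d] be a board and B′ = ([d]×[d]) ∖ B its complement. Then R(B′; i) = (−1)^d · R(B; −i−1) as an identity of polynomials in i. -/
open scoped Classical
open Finset Relation

noncomputable section

/-- A placement of non-taking rooks: no two squares in the same row or column. -/
def NonTaking {d : ℕ} (R : Finset (Fin d × Fin d)) : Prop :=
  ∀ a ∈ R, ∀ b ∈ R, (a.1 = b.1 ∨ a.2 = b.2) → a = b

/-- The rook number `r_k^B`: the number of ways of placing `k` non-taking rooks on `B`. -/
def rookNum {d : ℕ} (B : Finset (Fin d × Fin d)) (k : ℕ) : ℕ :=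
  ((Finset.powersetCard k B).filter NonTaking).card

/-- The factorial polynomial `R(B; i) = ∑_k r_k^B i^{\underline{d-k}}`. -/
def rookPoly (d : ℕ) (B : Finset (Fin d × Fin d)) : Polynomial ℚ :=
  ∑ k ∈ Finset.range (d + 1), (rookNum B k : ℚ) • ffall Polynomial.X (d - k)

/-!
Write `R(B; t) = ∑ t^{\underline{d - |P|}}` over the non-taking placements `P ⊆ B`. A placement
on the complement of `B` is a placement on the full board meeting `B` nowhere, so inclusion–exclusion
over the placements `T ⊆ B` it could contain gives
`R(B'; t) = ∑_T (-1)^{|T|} ∑_{R ⊇ T} t^{\underline{d - |R|}}`. Deleting `T` from `R` turns the inner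
sum into the factorial polynomial of the full `n × n` board with `n = d - |T|`. That board carries
`C(n, m)² m!` placements of `m` rooks (double counting), so by Chu–Vandermonde its factorial
polynomial is the rising factorial `(t + 1) ⋯ (t + n) = (-1)^n (-t - 1)^{\underline n}`, and the
signs combine to `(-1)^d`.
-/

open Polynomial

section FallingFactorial

variable {A : Type*} [CommRing A]

lemma ffall_eq_eval (t : A) (k : ℕ) : ffall t k = (descPochhammer A k).eval t :=
  (descPochhammer_eval_eq_prod_range k t).symm

lemma ffall_eq_smeval (t : A) (k : ℕ) : ffall t k = (descPochhammer ℤ k).smeval t := by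
  rw [ffall_eq_eval, ← aeval_eq_smeval, aeval_def, eval₂_eq_eval_map, descPochhammer_map]

lemma ffall_natCast (n k : ℕ) : ffall (n : A) k = n.descFactorial k := by
  rw [ffall_eq_smeval, descPochhammer_smeval_eq_descFactorial]

lemma ffall_add (s t : A) (n : ℕ) :
    ffall (s + t) n = ∑ ij ∈ antidiagonal n, n.choose ij.1 * (ffall s ij.1 * ffall t ij.2) := by
  simp only [ffall_eq_smeval]
  exact Ring.descPochhammer_smeval_add n (Commute.all s t)

lemma ffall_add_natCast_self (t : A) (n : ℕ) : ffall (t + n) n = (-1) ^ n * ffall (-t - 1) n := by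
  rw [ffall_eq_eval, ffall_eq_eval, descPochhammer_eval_eq_ascPochhammer, add_sub_cancel_right,
    ← ascPochhammer_eval_neg_eq_descPochhammer, neg_sub, sub_neg_eq_add, add_comm]

lemma ffall_X_comp (q : A[X]) (k : ℕ) : (ffall (X : A[X]) k).comp q = ffall q k := by
  simp [ffall, Polynomial.prod_comp]

lemma sum_choose_mul_choose_mul_factorial_nsmul_ffall (t : A) (n : ℕ) :
    ∑ m ∈ range (n + 1), (n.choose m * n.choose m * m.factorial) • ffall t (n - m)
      = ffall (t + n) n := by
  rw [ffall_add, ← Nat.sum_antidiagonal_swap, Nat.sum_antidiagonal_eq_sum_range_succ_mk]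
  refine sum_congr rfl fun m hm => ?_
  have hm : m ≤ n := Nat.lt_succ_iff.mp (mem_range.mp hm)
  simp only [Prod.swap_prod_mk, ffall_natCast, Nat.choose_symm hm,
    Nat.descFactorial_eq_factorial_mul_choose, nsmul_eq_mul]
  push_cast
  ring

end FallingFactorial

section Placements

variable {d : ℕ}

def placements (S : Finset (Fin d × Fin d)) : Finset (Finset (Fin d × Fin d)) :=
  S.powerset.filter NonTaking

@[simp]
lemma mem_placements {S P : Finset (Fin d × Fin d)} :
    P ∈ placements S ↔ P ⊆ S ∧ NonTaking P := by
  simp [placements]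

lemma rookNum_eq_card_filter_placements (S : Finset (Fin d × Fin d)) (k : ℕ) :
    rookNum S k = #((placements S).filter (#· = k)) := by
  rw [rookNum, placements, powersetCard_eq_filter, filter_filter, filter_filter]
  simp only [and_comm]

lemma rookNum_zero (S : Finset (Fin d × Fin d)) : rookNum S 0 = 1 := by
  rw [rookNum, powersetCard_zero, filter_singleton, if_pos (by simp [NonTaking]), card_singleton]

lemma NonTaking.mono {R S : Finset (Fin d × Fin d)} (hS : NonTaking S) (h : R ⊆ S) :
    NonTaking R :=
  fun a ha b hb hab => hS a (h ha) b (h hb) hab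

lemma NonTaking.card_image_fst {R : Finset (Fin d × Fin d)} (hR : NonTaking R) :
    #(R.image Prod.fst) = #R :=
  card_image_of_injOn fun a ha b hb hab => hR a ha b hb (Or.inl hab)

lemma NonTaking.card_image_snd {R : Finset (Fin d × Fin d)} (hR : NonTaking R) :
    #(R.image Prod.snd) = #R :=
  card_image_of_injOn fun a ha b hb hab => hR a ha b hb (Or.inr hab)

lemma NonTaking.card_le_of_subset_product {R : Finset (Fin d × Fin d)} (hR : NonTaking R)
    {S₁ S₂ : Finset (Fin d)} (h : R ⊆ S₁ ×ˢ S₂) : #R ≤ #S₁ :=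
  hR.card_image_fst ▸ card_le_card (image_subset_iff.mpr fun _ hx ↦ (mem_product.mp (h hx)).1)

lemma NonTaking.card_le {R : Finset (Fin d × Fin d)} (hR : NonTaking R) : #R ≤ d := by
  simpa using hR.card_le_of_subset_product (subset_univ R)

lemma sum_placements_eq_sum_rookNum {M : Type*} [AddCommMonoid M] (S : Finset (Fin d × Fin d))
    {N : ℕ} (hN : ∀ P ∈ placements S, #P ≤ N) (f : ℕ → M) :
    ∑ P ∈ placements S, f #P = ∑ k ∈ range (N + 1), rookNum S k • f k := by
  rw [← sum_fiberwise_of_maps_to (g := card) fun P hP ↦ mem_range_succ_iff.mpr (hN P hP)]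
  refine sum_congr rfl fun k _ ↦ ?_
  rw [rookNum_eq_card_filter_placements, ← sum_const]
  exact sum_congr rfl fun P hP ↦ by rw [(mem_filter.mp hP).2]

def freeCells (S T : Finset (Fin d × Fin d)) : Finset (Fin d × Fin d) :=
  S.filter fun x ↦ ∀ t ∈ T, x.1 ≠ t.1 ∧ x.2 ≠ t.2

lemma freeCells_product (S₁ S₂ : Finset (Fin d)) (T : Finset (Fin d × Fin d)) :
    freeCells (S₁ ×ˢ S₂) T = (S₁ \ T.image Prod.fst) ×ˢ (S₂ \ T.image Prod.snd) := by
  ext x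
  simp only [freeCells, mem_filter, mem_product, mem_sdiff, mem_image, not_exists, not_and]
  constructor
  · rintro ⟨⟨h₁, h₂⟩, h⟩
    exact ⟨⟨h₁, fun t ht e ↦ (h t ht).1 e.symm⟩, h₂, fun t ht e ↦ (h t ht).2 e.symm⟩
  · rintro ⟨⟨h₁, h₁'⟩, h₂, h₂'⟩
    exact ⟨⟨h₁, h₂⟩, fun t ht ↦ ⟨fun e ↦ h₁' t ht e.symm, fun e ↦ h₂' t ht e.symm⟩⟩

lemma NonTaking.union {Q T : Finset (Fin d × Fin d)} (hQ : NonTaking Q) (hT : NonTaking T)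
    (hQT : ∀ x ∈ Q, ∀ t ∈ T, x.1 ≠ t.1 ∧ x.2 ≠ t.2) : NonTaking (Q ∪ T) := by
  intro a ha b hb hab
  rcases mem_union.mp ha with ha | ha <;> rcases mem_union.mp hb with hb | hb
  · exact hQ a ha b hb hab
  · have := hQT a ha b hb; tauto
  · have := hQT b hb a ha; tauto
  · exact hT a ha b hb hab

/-- Removing `T` is a bijection from the placements on `S` that contain `T` onto the
placements on the cells that `T` leaves free. -/
lemma sum_placements_superset {M : Type*} [AddCommMonoid M] {S T : Finset (Fin d × Fin d)}
    (hTS : T ⊆ S) (hT : NonTaking T) (f : ℕ → M) :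
    ∑ P ∈ (placements S).filter (T ⊆ ·), f #P
      = ∑ Q ∈ placements (freeCells S T), f (#Q + #T) := by
  have free_disjoint {Q : Finset (Fin d × Fin d)} (hQ : Q ⊆ freeCells S T) : Disjoint Q T :=
    disjoint_left.mpr fun x hxQ hxT ↦ ((mem_filter.mp (hQ hxQ)).2 x hxT).1 rfl
  refine sum_nbij' (· \ T) (· ∪ T) (fun P hP ↦ ?_) (fun Q hQ ↦ ?_) (fun P hP ↦ ?_)
    (fun Q hQ ↦ ?_) (fun P hP ↦ ?_)
  · simp only [mem_filter, mem_placements] at hP ⊢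
    obtain ⟨⟨hPS, hP⟩, hTP⟩ := hP
    refine ⟨fun x hx ↦ mem_filter.mpr ⟨hPS (sdiff_subset hx), fun t ht ↦ ?_⟩,
      hP.mono sdiff_subset⟩
    have hne : x ≠ t := fun e ↦ (mem_sdiff.mp hx).2 (e ▸ ht)
    have := hP x (sdiff_subset hx) t (hTP ht)
    tauto
  · simp only [mem_filter, mem_placements] at hQ ⊢
    refine ⟨⟨union_subset (fun x hx ↦ (mem_filter.mp (hQ.1 hx)).1) hTS,
      hQ.2.union hT fun x hx ↦ (mem_filter.mp (hQ.1 hx)).2⟩, subset_union_right⟩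
  · simp only [mem_filter] at hP
    exact sdiff_union_of_subset hP.2
  · simp only [mem_placements] at hQ
    exact union_sdiff_cancel_right (free_disjoint hQ.1)
  · simp only [mem_filter] at hP
    rw [card_sdiff_add_card_eq_card hP.2]

end Placements

section RectangularBoards

variable {d : ℕ}

lemma card_filter_mem_placements_eq_rookNum {S : Finset (Fin d × Fin d)} {x : Fin d × Fin d}
    (hx : x ∈ S) (m : ℕ) :
    #(((placements S).filter (#· = m + 1)).filter (x ∈ ·)) = rookNum (freeCells S {x}) m := by
  have hx' : NonTaking {x} := by simp [NonTaking]
  have h := sum_placements_superset (singleton_subset_iff.mpr hx) hx'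
    fun k ↦ if k = m + 1 then 1 else 0
  simp only [sum_filter, singleton_subset_iff, card_singleton, add_left_inj, ← ite_and] at h
  rw [rookNum_eq_card_filter_placements, filter_filter, card_filter, card_filter, ← h]
  simp only [and_comm]

/-- Double counting of the pairs (placement of `m + 1` rooks, one of its rooks). -/
lemma succ_mul_rookNum_succ (S : Finset (Fin d × Fin d)) (m : ℕ) :
    (m + 1) * rookNum S (m + 1) = ∑ x ∈ S, rookNum (freeCells S {x}) m := by
  have h := sum_card_bipartiteAbove_eq_sum_card_bipartiteBelow
    (s := (placements S).filter (#· = m + 1)) (t := S) (r := fun P x ↦ x ∈ P)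
  have habove : ∀ P ∈ (placements S).filter (#· = m + 1),
      #(S.bipartiteAbove (fun P x ↦ x ∈ P) P) = m + 1 := by
    intro P hP
    obtain ⟨⟨hPS, -⟩, hP⟩ := by simpa using hP
    rw [bipartiteAbove, filter_mem_eq_inter, inter_eq_right.mpr hPS, hP]
  rw [sum_congr rfl habove, sum_const, smul_eq_mul, ← rookNum_eq_card_filter_placements] at h
  rw [mul_comm, h]
  exact sum_congr rfl fun x hx ↦ card_filter_mem_placements_eq_rookNum hx m

lemma Nat.mul_sub_one_choose (n m : ℕ) : n * (n - 1).choose m = n.choose (m + 1) * (m + 1) := by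
  cases n with
  | zero => simp
  | succ n => exact Nat.add_one_mul_choose_eq n m

lemma rookNum_product (S₁ S₂ : Finset (Fin d)) (m : ℕ) :
    rookNum (S₁ ×ˢ S₂) m = (#S₁).choose m * (#S₂).choose m * m.factorial := by
  induction m generalizing S₁ S₂ with
  | zero => simp [rookNum_zero]
  | succ m ih =>
    have hfree (x : Fin d × Fin d) :
        freeCells (S₁ ×ˢ S₂) {x} = (S₁.erase x.1) ×ˢ (S₂.erase x.2) := by
      rw [freeCells_product, image_singleton, image_singleton, sdiff_singleton_eq_erase,
        sdiff_singleton_eq_erase]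
    have h := succ_mul_rookNum_succ (S₁ ×ˢ S₂) m
    have hterm : ∀ x ∈ S₁ ×ˢ S₂, rookNum (freeCells (S₁ ×ˢ S₂) {x}) m
        = (#S₁ - 1).choose m * (#S₂ - 1).choose m * m.factorial := by
      intro x hx
      obtain ⟨h₁, h₂⟩ := mem_product.mp hx
      rw [hfree, ih, card_erase_of_mem h₁, card_erase_of_mem h₂]
    rw [sum_congr rfl hterm, sum_const, card_product, smul_eq_mul] at h
    refine Nat.eq_of_mul_eq_mul_left m.succ_pos (h.trans ?_)
    calc #S₁ * #S₂ * ((#S₁ - 1).choose m * (#S₂ - 1).choose m * m.factorial)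
        = (#S₁ * (#S₁ - 1).choose m) * (#S₂ * (#S₂ - 1).choose m) * m.factorial := by ring
      _ = (m + 1) * ((#S₁).choose (m + 1) * (#S₂).choose (m + 1) * (m + 1).factorial) := by
        rw [Nat.mul_sub_one_choose, Nat.mul_sub_one_choose, Nat.factorial_succ]
        ring

lemma sum_placements_product_ffall {A : Type*} [CommRing A] {S₁ S₂ : Finset (Fin d)} {n : ℕ}
    (h₁ : #S₁ = n) (h₂ : #S₂ = n) (t : A) :
    ∑ Q ∈ placements (S₁ ×ˢ S₂), ffall t (n - #Q) = ffall (t + n) n := by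
  have hcard : ∀ Q ∈ placements (S₁ ×ˢ S₂), #Q ≤ n := fun Q hQ ↦
    h₁ ▸ (mem_placements.mp hQ).2.card_le_of_subset_product (mem_placements.mp hQ).1
  rw [sum_placements_eq_sum_rookNum _ hcard fun k ↦ ffall t (n - k),
    ← sum_choose_mul_choose_mul_factorial_nsmul_ffall]
  simp only [rookNum_product, h₁, h₂]

end RectangularBoards

lemma Finset.sum_filter_disjoint_eq_sum_powerset {α M : Type*} [DecidableEq α] [AddCommGroup M]
    (U : Finset (Finset α)) (B : Finset α) (f : Finset α → M) :
    ∑ R ∈ U.filter (Disjoint B ·), f R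
      = ∑ T ∈ B.powerset, (-1 : ℤ) ^ #T • ∑ R ∈ U.filter (T ⊆ ·), f R := by
  have hsign (R : Finset α) :
      ∑ T ∈ B.powerset, (if T ⊆ R then (-1 : ℤ) ^ #T else 0) = if Disjoint B R then 1 else 0 := by
    have hfilter : B.powerset.filter (· ⊆ R) = (B ∩ R).powerset := by
      ext T
      simp only [mem_filter, mem_powerset, subset_inter_iff]
    rw [← sum_filter, hfilter, sum_powerset_neg_one_pow_card]
    simp only [disjoint_iff_inter_eq_empty]
  simp only [sum_filter, smul_sum]
  rw [sum_comm]
  refine sum_congr rfl fun R _ ↦ ?_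
  rw [← one_smul ℤ (f R), ← ite_zero_smul, ← hsign, sum_smul]
  exact sum_congr rfl fun T _ ↦ by split_ifs <;> simp

section FullBoard

variable {d : ℕ}

lemma sum_placements_univ_superset_ffall {A : Type*} [CommRing A] {T : Finset (Fin d × Fin d)}
    (hT : NonTaking T) (t : A) :
    ∑ R ∈ (placements univ).filter (T ⊆ ·), ffall t (d - #R)
      = ffall (t + ↑(d - #T)) (d - #T) := by
  have hrows : #(univ \ T.image Prod.fst) = d - #T := by
    rw [card_sdiff_of_subset (subset_univ _), card_univ, Fintype.card_fin, hT.card_image_fst]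
  have hcols : #(univ \ T.image Prod.snd) = d - #T := by
    rw [card_sdiff_of_subset (subset_univ _), card_univ, Fintype.card_fin, hT.card_image_snd]
  rw [sum_placements_superset (subset_univ T) hT fun k ↦ ffall t (d - k), ← univ_product_univ,
    freeCells_product, ← sum_placements_product_ffall hrows hcols]
  simp only [Nat.sub_sub, add_comm]

lemma rookPoly_eq_sum_placements (B : Finset (Fin d × Fin d)) :
    rookPoly d B = ∑ R ∈ placements B, ffall X (d - #R) := by
  rw [rookPoly, sum_placements_eq_sum_rookNum B (fun R hR ↦ (mem_placements.mp hR).2.card_le)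
    fun k ↦ ffall X (d - k)]
  simp only [Nat.cast_smul_eq_nsmul]

end FullBoard

/-- For a board `B ⊆ [d] × [d]` with complement `B'`,
`R(B'; i) = (-1)^d R(B; -i-1)` as polynomials in `i`. -/
theorem factorial_polynomial_reciprocity (d : ℕ) (B : Finset (Fin d × Fin d)) :
    rookPoly d ((Finset.univ : Finset (Fin d × Fin d)) \ B) =
      (-1 : ℚ) ^ d • (rookPoly d B).comp (-Polynomial.X - 1) := by
  have hcompl : placements (univ \ B) = (placements univ).filter (Disjoint B ·) := by
    ext R
    simp [subset_sdiff, disjoint_comm, and_comm]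
  have hnonTaking : ∀ T ∈ B.powerset, (-1 : ℤ) ^ #T •
      ∑ R ∈ (placements univ).filter (T ⊆ ·), ffall (X : ℚ[X]) (d - #R) ≠ 0 → NonTaking T := by
    intro T _ h
    obtain ⟨R, hR, -⟩ := exists_ne_zero_of_sum_ne_zero (right_ne_zero_of_smul h)
    exact (mem_placements.mp (mem_filter.mp hR).1).2.mono (mem_filter.mp hR).2
  have hsign : ∀ T ∈ placements B, (-1 : ℤ) ^ #T •
      ∑ R ∈ (placements univ).filter (T ⊆ ·), ffall (X : ℚ[X]) (d - #R)
        = (-1 : ℚ) ^ d • ffall (-X - 1) (d - #T) := by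
    intro T hT
    have hT := (mem_placements.mp hT).2
    rw [sum_placements_univ_superset_ffall hT, ffall_add_natCast_self, zsmul_eq_mul, ← mul_assoc,
      Int.cast_pow, Int.cast_neg, Int.cast_one, ← pow_add, Nat.add_sub_cancel' hT.card_le,
      smul_eq_C_mul, map_pow, map_neg, map_one]
  rw [rookPoly_eq_sum_placements, hcompl, sum_filter_disjoint_eq_sum_powerset,
    ← sum_filter_of_ne hnonTaking, ← placements, sum_congr rfl hsign, rookPoly_eq_sum_placements,
    Polynomial.sum_comp, smul_sum]
  simp only [ffall_X_comp]
end
end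

section
/- The functions Ξ̃_λ, as λ ranges over integer partitions of n, form a linear basis for the space of homogeneous symmetric functions of degree n over the rationals. -/
open scoped Classical
open Finset Relation

noncomputable section

/-- Vertex type for a disjoint union of directed paths (with sizes listed in `L`)
and directed cycles (with sizes listed in `M`). -/
abbrev PCVert (L M : List ℕ) : Type :=
  (Σ k : Fin L.length, Fin (L.get k)) ⊕ (Σ k : Fin M.length, Fin (M.get k))

/-- The edge set of `D_{λ,μ}`: a disjoint union of directed paths with sizes `L` and
directed cycles with sizes `M`. -/
def pcEdges (L M : List ℕ) : Finset (PCVert L M × PCVert L M) :=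
  Finset.univ.filter fun e =>
    match e with
    | (Sum.inl ⟨k, i⟩, Sum.inl ⟨k', j⟩) => (k : ℕ) = (k' : ℕ) ∧ (j : ℕ) = (i : ℕ) + 1
    | (Sum.inr ⟨k, i⟩, Sum.inr ⟨k', j⟩) =>
        (k : ℕ) = (k' : ℕ) ∧ (j : ℕ) = ((i : ℕ) + 1) % (M.get k')
    | _ => False

/-- The symmetric function `Ξ̃_λ = ∑_S m̃_{π(S)} / ℓ(π(S))!`, summed over all path covers
`S` of the disjoint union `D_λ` of directed paths whose sizes are the parts of `λ`
(a formal power series in one countable family of variables). -/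
def XiTilde1 (lam : Multiset ℕ) : MvPowerSeries ℕ ℚ :=
  ∑ S : PCC (pcEdges (lam.sort (· ≤ ·)) []),
    ((Multiset.card (PCC.pathType S)).factorial : ℚ)⁻¹ •
      maugP (fun _ : ℕ => True) (PCC.pathType S)

/-- A power series is a symmetric function: it is invariant under every permutation of the
variables. -/
def IsSymmFn (g : MvPowerSeries ℕ ℚ) : Prop :=
  ∀ (e : Equiv.Perm ℕ) (d : ℕ →₀ ℕ), g (Finsupp.equivMapDomain e d) = g d

/-- A power series is homogeneous of degree `n`. -/
def IsHomogFn (n : ℕ) (g : MvPowerSeries ℕ ℚ) : Prop :=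
  ∀ d : ℕ →₀ ℕ, g d ≠ 0 → (∑ s ∈ d.support, d s) = n

/-- The space of homogeneous symmetric functions of degree `n` over `ℚ`. -/
def homSymSpace (n : ℕ) : Submodule ℚ (MvPowerSeries ℕ ℚ) where
  carrier := {g | IsSymmFn g ∧ IsHomogFn n g}
  add_mem' := by
    rintro g h ⟨hg1, hg2⟩ ⟨hh1, hh2⟩
    constructor
    · intro e d
      have h1 : (g + h) (Finsupp.equivMapDomain e d) =
          g (Finsupp.equivMapDomain e d) + h (Finsupp.equivMapDomain e d) := rfl
      have h2 : (g + h) d = g d + h d := rfl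
      rw [h1, h2, hg1 e d, hh1 e d]
    · intro d hd
      have h2 : (g + h) d = g d + h d := rfl
      rw [h2] at hd
      by_cases h1 : g d = 0
      · exact hh2 d fun hh => hd (by rw [h1, hh, add_zero])
      · exact hg2 d h1
  zero_mem' := by
    constructor
    · intro e d; rfl
    · intro d hd; exact absurd rfl hd
  smul_mem' := by
    rintro q g ⟨hg1, hg2⟩
    constructor
    · intro e d
      have h1 : (q • g) (Finsupp.equivMapDomain e d) =
          q * g (Finsupp.equivMapDomain e d) := rfl
      have h2 : (q • g) d = q * g d := rfl
      rw [h1, h2, hg1 e d]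
    · intro d hd
      have h2 : (q • g) d = q * g d := rfl
      rw [h2] at hd
      exact hg2 d fun hh => hd (by rw [hh, mul_zero])

/-! ### Part I : generalities on the coefficient spaces -/

/-- Evaluation of a power series at a monomial, as a linear map. -/
def evalAt (d : ℕ →₀ ℕ) : MvPowerSeries ℕ ℚ →ₗ[ℚ] ℚ where
  toFun g := g d
  map_add' _ _ := rfl
  map_smul' _ _ := rfl

lemma expShape_sum (d : ℕ →₀ ℕ) : (expShape d).sum = ∑ s ∈ d.support, d s := rfl

lemma expShape_eq_zero {d : ℕ →₀ ℕ} (h : expShape d = 0) : d = 0 := by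
  rw [expShape, Multiset.map_eq_zero] at h
  exact Finsupp.support_eq_empty.mp (Finset.val_eq_zero.mp h)

lemma expShape_pos {d : ℕ →₀ ℕ} {x : ℕ} (hx : x ∈ expShape d) : 0 < x := by
  rw [expShape, Multiset.mem_map] at hx
  obtain ⟨s, hs, rfl⟩ := hx
  exact Nat.pos_of_ne_zero (Finsupp.mem_support_iff.mp hs)

lemma expShape_equivMapDomain (e : Equiv.Perm ℕ) (d : ℕ →₀ ℕ) :
    expShape (Finsupp.equivMapDomain e d) = expShape d := by
  have hs : (Finsupp.equivMapDomain e d).support = d.support.map e.toEmbedding := by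
    ext a
    simp [Finsupp.mem_support_iff, Finset.mem_map_equiv, Finsupp.equivMapDomain_apply]
  rw [expShape, hs, Finset.map_val, Multiset.map_map]
  refine Multiset.map_congr rfl fun x _ => ?_
  simp [Finsupp.equivMapDomain_apply]

lemma expShape_erase (d : ℕ →₀ ℕ) {b : ℕ} (hb : b ∈ d.support) :
    expShape (d.erase b) = (expShape d).erase (d b) := by
  have h1 : d.support.val = b ::ₘ d.support.val.erase b :=
    (Multiset.cons_erase (by exact hb)).symm
  have h2 : (d.support.val.erase b).map d = (d.support.val.erase b).map (d.erase b) := by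
    refine Multiset.map_congr rfl fun x hx => ?_
    have hxb : x ≠ b := by
      have hx' : x ∈ d.support.erase b := by
        rw [Finset.mem_def, Finset.erase_val]; exact hx
      exact Finset.ne_of_mem_erase hx'
    rw [Finsupp.erase_ne hxb]
  rw [expShape, expShape, Finsupp.support_erase, Finset.erase_val, h2.symm]
  conv_rhs => rw [h1]
  rw [Multiset.map_cons, Multiset.erase_cons_head]

lemma exists_perm_of_expShape_eq :
    ∀ (m : ℕ) (d d' : ℕ →₀ ℕ), Multiset.card (expShape d') ≤ m →
      expShape d = expShape d' →
      ∃ e : Equiv.Perm ℕ, Finsupp.equivMapDomain e d' = d := by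
  intro m
  induction m with
  | zero =>
    intro d d' hc hsh
    have h' : expShape d' = 0 := Multiset.card_eq_zero.mp (Nat.le_zero.mp hc)
    have hd' : d' = 0 := expShape_eq_zero h'
    have hd : d = 0 := expShape_eq_zero (by rw [hsh, h'])
    exact ⟨1, by subst hd hd'; ext x; simp⟩
  | succ m ih =>
    intro d d' hc hsh
    by_cases h0 : d' = 0
    · have hd : d = 0 := expShape_eq_zero (by rw [hsh, h0]; simp [expShape])
      exact ⟨1, by subst hd h0; ext x; simp⟩
    · obtain ⟨a, ha⟩ := Finsupp.support_nonempty_iff.mpr h0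
      set v := d' a with hv
      have hvmem' : v ∈ expShape d' := Multiset.mem_map_of_mem _ (by exact ha)
      have hvmem : v ∈ expShape d := by rw [hsh]; exact hvmem'
      obtain ⟨b, hb, hbv⟩ := Multiset.mem_map.mp hvmem
      have hsh2 : expShape (d.erase b) = expShape (d'.erase a) := by
        rw [expShape_erase d hb, expShape_erase d' ha, hbv, ← hv, hsh]
      have hc2 : Multiset.card (expShape (d'.erase a)) ≤ m := by
        rw [expShape_erase d' ha, ← hv, Multiset.card_erase_of_mem hvmem']
        exact Nat.pred_le_pred hc
      obtain ⟨e0, he0⟩ := ih (d.erase b) (d'.erase a) hc2 hsh2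
      have he0' : ∀ x, (d'.erase a) (e0.symm x) = (d.erase b) x := fun x => by
        rw [← he0]; simp [Finsupp.equivMapDomain_apply]
      refine ⟨e0.trans (Equiv.swap (e0 a) b), ?_⟩
      ext x
      have hxval : (Finsupp.equivMapDomain (e0.trans (Equiv.swap (e0 a) b)) d') x
          = d' (e0.symm (Equiv.swap (e0 a) b x)) := by
        simp [Finsupp.equivMapDomain_apply]
      rw [hxval]
      by_cases hxb : x = b
      · subst hxb
        rw [Equiv.swap_apply_right, Equiv.symm_apply_apply, ← hv, ← hbv]
      · by_cases hxa : x = e0 a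
        · subst hxa
          rw [Equiv.swap_apply_left]
          have h1 : (d'.erase a) (e0.symm b) = 0 := by rw [he0' b, Finsupp.erase_same]
          have h2 : e0.symm b ≠ a := by
            intro h; apply hxb; rw [← h, Equiv.apply_symm_apply]
          rw [Finsupp.erase_ne h2] at h1
          rw [h1]
          have h3 : (d.erase b) (e0 a) = 0 := by
            rw [← he0' (e0 a), Equiv.symm_apply_apply, Finsupp.erase_same]
          rw [Finsupp.erase_ne hxb] at h3
          rw [h3]
        · have h2 : e0.symm x ≠ a := by
            intro h; apply hxa; rw [← h, Equiv.apply_symm_apply]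
          rw [Equiv.swap_apply_of_ne_of_ne hxa hxb]
          have := he0' x
          rwa [Finsupp.erase_ne h2, Finsupp.erase_ne hxb] at this

/-- The canonical monomial whose exponents are the parts of `lam`. -/
def canon (lam : Multiset ℕ) : ℕ →₀ ℕ :=
  Finsupp.onFinset (Finset.range (lam.sort (· ≤ ·)).length)
    (fun i => (lam.sort (· ≤ ·)).getD i 0)
    (fun i h => Finset.mem_range.mpr (by
      by_contra hc
      exact h (List.getD_eq_default _ _ (le_of_not_gt hc))))

lemma canon_apply (lam : Multiset ℕ) (i : ℕ) :
    canon lam i = (lam.sort (· ≤ ·)).getD i 0 := rfl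

lemma canon_support (lam : Multiset ℕ) (hpos : ∀ x ∈ lam, 0 < x) :
    (canon lam).support = Finset.range (lam.sort (· ≤ ·)).length := by
  ext i
  rw [Finsupp.mem_support_iff, canon_apply, Finset.mem_range]
  constructor
  · intro h
    by_contra hc
    exact h (List.getD_eq_default _ _ (le_of_not_gt hc))
  · intro h
    rw [List.getD_eq_getElem _ _ h]
    have hm : (lam.sort (· ≤ ·))[i] ∈ lam := (Multiset.mem_sort _).mp (List.getElem_mem h)
    have := hpos _ hm
    omega

lemma expShape_canon (lam : Multiset ℕ) (hpos : ∀ x ∈ lam, 0 < x) :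
    expShape (canon lam) = lam := by
  rw [expShape, canon_support lam hpos]
  set l := lam.sort (· ≤ ·) with hl
  have h1 : (Finset.range l.length).val = (List.range l.length : Multiset ℕ) := rfl
  rw [h1]
  have h2 : ((List.range l.length : List ℕ) : Multiset ℕ).map (canon lam)
      = ((List.range l.length).map (fun i => l.getD i 0) : List ℕ) := by
    exact Multiset.map_coe _ _
  rw [h2]
  have h3 : (List.range l.length).map (fun i => l.getD i 0) = l := by
    apply List.ext_getElem
    · simp
    · intro i h5 h6
      simp only [List.getElem_map, List.getElem_range]
      exact List.getD_eq_getElem _ _ (by simpa using h6)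
  rw [h3, hl, Multiset.sort_eq]

lemma eq_zero_of_vanish {n : ℕ} (g : MvPowerSeries ℕ ℚ) (hg : g ∈ homSymSpace n)
    (h : ∀ p : n.Partition, g (canon p.parts) = 0) : g = 0 := by
  obtain ⟨hsym, hhom⟩ := hg
  funext d
  show g d = 0
  by_cases hd : ∑ s ∈ d.support, d s = n
  · set p : n.Partition :=
      ⟨expShape d, fun hi => expShape_pos hi, by rw [expShape_sum]; exact hd⟩ with hp
    have hsh : expShape d = expShape (canon p.parts) := by
      rw [expShape_canon p.parts (fun _ hx => p.parts_pos hx)]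
    obtain ⟨e, he⟩ := exists_perm_of_expShape_eq (Multiset.card (expShape (canon p.parts)))
      d (canon p.parts) le_rfl hsh
    calc g d = g (Finsupp.equivMapDomain e (canon p.parts)) := by rw [he]
    _ = g (canon p.parts) := hsym e _
    _ = 0 := h p
  · by_contra hne
    exact hd (hhom d hne)

/-! ### Part II : combinatorics of path covers of disjoint unions of paths -/

section Blocks

variable {V : Type*} [Fintype V] [DecidableEq V] {E : Finset (V × V)} (S : PCC E)

lemma mem_blockOf {u v : V} : u ∈ S.blockOf v ↔ S.connRel v u := by
  simp [PCC.blockOf]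

lemma self_mem_blockOf (v : V) : v ∈ S.blockOf v :=
  (mem_blockOf S).mpr (EqvGen.refl v)

lemma blockOf_eq_of_rel {u v : V} (h : S.connRel u v) : S.blockOf u = S.blockOf v := by
  ext x
  rw [mem_blockOf, mem_blockOf]
  exact ⟨fun hx => EqvGen.trans _ _ _ (EqvGen.symm _ _ h) hx, fun hx => EqvGen.trans _ _ _ h hx⟩

lemma mem_blocks {b : Finset V} : b ∈ S.blocks ↔ ∃ v, S.blockOf v = b := by
  simp [PCC.blocks]

lemma blocks_disjoint {b b' : Finset V} (hb : b ∈ S.blocks) (hb' : b' ∈ S.blocks)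
    (hne : b ≠ b') : Disjoint b b' := by
  obtain ⟨v, rfl⟩ := (mem_blocks S).mp hb
  obtain ⟨v', rfl⟩ := (mem_blocks S).mp hb'
  rw [Finset.disjoint_left]
  intro x hx hx'
  exact hne (blockOf_eq_of_rel S
    (EqvGen.trans _ _ _ ((mem_blockOf S).mp hx) (EqvGen.symm _ _ ((mem_blockOf S).mp hx'))))

lemma sum_card_blocks : ∑ b ∈ S.blocks, b.card = Fintype.card V := by
  have hU : S.blocks.biUnion id = Finset.univ := by
    apply Finset.eq_univ_of_forall
    intro v
    exact Finset.mem_biUnion.mpr ⟨S.blockOf v, (mem_blocks S).mpr ⟨v, rfl⟩,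
      self_mem_blockOf S v⟩
  calc ∑ b ∈ S.blocks, b.card = (S.blocks.biUnion id).card :=
        (Finset.card_biUnion fun b hb b' hb' hne => blocks_disjoint S hb hb' hne).symm
  _ = Fintype.card V := by rw [hU, Finset.card_univ]

end Blocks

section PathCase

variable {L : List ℕ}

lemma pcVert_cases (v : PCVert L []) :
    ∃ p : Σ k : Fin L.length, Fin (L.get k), v = Sum.inl p := by
  cases v with
  | inl p => exact ⟨p, rfl⟩
  | inr q => exact q.1.elim0

/-- Path index of a vertex. -/
def pk (v : PCVert L []) : ℕ :=
  match v with
  | Sum.inl p => p.1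
  | Sum.inr _ => 0

/-- Height of a vertex along its path. -/
def ht (v : PCVert L []) : ℕ :=
  match v with
  | Sum.inl p => p.2
  | Sum.inr _ => 0

variable {S : PCC (pcEdges L [])}

lemma next_eq {v w : PCVert L []} (h : S.next v = some w) :
    ∃ (k : Fin L.length) (i j : Fin (L.get k)),
      v = Sum.inl ⟨k, i⟩ ∧ w = Sum.inl ⟨k, j⟩ ∧ (j : ℕ) = (i : ℕ) + 1 := by
  have hm := S.mem_edges v w h
  rw [pcEdges, Finset.mem_filter] at hm
  obtain ⟨-, hm⟩ := hm
  obtain ⟨⟨k, i⟩, rfl⟩ := pcVert_cases v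
  obtain ⟨⟨k', j⟩, rfl⟩ := pcVert_cases w
  obtain ⟨hk, hj⟩ := hm
  have hkk : k = k' := Fin.ext hk
  subst hkk
  exact ⟨k, i, j, rfl, rfl, hj⟩

lemma pk_ht_next {v w : PCVert L []} (h : S.next v = some w) :
    pk w = pk v ∧ ht w = ht v + 1 := by
  obtain ⟨k, i, j, rfl, rfl, hj⟩ := next_eq h
  exact ⟨rfl, hj⟩

lemma iterNext_spec : ∀ (m : ℕ) (v w : PCVert L []), S.iterNext m v = some w →
    pk w = pk v ∧ ht w = ht v + m := by
  intro m
  induction m with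
  | zero =>
    intro v w h
    obtain rfl : v = w := by simpa [PCC.iterNext] using h
    simp
  | succ m ih =>
    intro v w h
    rw [PCC.iterNext] at h
    obtain ⟨u, hu, hw⟩ := Option.bind_eq_some_iff.mp h
    obtain ⟨h1, h2⟩ := ih v u hu
    obtain ⟨h3, h4⟩ := pk_ht_next hw
    exact ⟨h3.trans h1, by omega⟩

lemma not_isCyclicVert (v : PCVert L []) : ¬ S.IsCyclicVert v := by
  rintro ⟨m, hm, h⟩
  have := (iterNext_spec m v v h).2
  omega

lemma connRel_pk {u v : PCVert L []} (h : S.connRel u v) : pk u = pk v := by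
  induction h with
  | rel a b hab => exact (pk_ht_next hab).1.symm
  | refl => rfl
  | symm _ _ _ ih => exact ih.symm
  | trans _ _ _ _ _ ih1 ih2 => exact ih1.trans ih2

lemma pathType_eq : S.pathType = S.blocks.val.map Finset.card := by
  rw [PCC.pathType, Finset.filter_true_of_mem]
  rintro b - ⟨v, -, hv⟩
  exact not_isCyclicVert v hv

lemma card_V : Fintype.card (PCVert L []) = L.sum := by
  have hB : IsEmpty (Σ k : Fin (List.length ([] : List ℕ)), Fin (List.get [] k)) :=
    ⟨fun q => q.1.elim0⟩
  rw [Fintype.card_sum, Fintype.card_sigma, @Fintype.card_eq_zero _ _ hB]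
  simp only [Fintype.card_fin, add_zero]
  rw [← List.sum_ofFn, List.ofFn_get]

lemma sum_pathType : S.pathType.sum = L.sum := by
  rw [pathType_eq]
  calc (S.blocks.val.map Finset.card).sum = ∑ b ∈ S.blocks, b.card := rfl
  _ = Fintype.card (PCVert L []) := sum_card_blocks S
  _ = L.sum := card_V

lemma card_pathType : Multiset.card S.pathType = S.blocks.card := by
  rw [pathType_eq, Multiset.card_map]
  rfl

/-- The first vertex of the `k`-th path. -/
def v0 (hpos : ∀ k : Fin L.length, 0 < L.get k) (k : Fin L.length) : PCVert L [] :=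
  Sum.inl ⟨k, ⟨0, hpos k⟩⟩

lemma blockOf_v0_inj (hpos : ∀ k : Fin L.length, 0 < L.get k) :
    Function.Injective (fun k : Fin L.length => S.blockOf (v0 hpos k)) := by
  intro k k' h
  have h' : S.blockOf (v0 hpos k) = S.blockOf (v0 hpos k') := h
  have h1 : v0 hpos k' ∈ S.blockOf (v0 hpos k) := by
    rw [h']; exact self_mem_blockOf S _
  have h2 := connRel_pk ((mem_blockOf S).mp h1)
  exact Fin.ext h2

lemma image_v0_subset (hpos : ∀ k : Fin L.length, 0 < L.get k) :
    Finset.univ.image (fun k : Fin L.length => S.blockOf (v0 hpos k)) ⊆ S.blocks := by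
  intro b hb
  obtain ⟨k, -, rfl⟩ := Finset.mem_image.mp hb
  exact (mem_blocks S).mpr ⟨_, rfl⟩

lemma blocks_card_ge (hpos : ∀ k : Fin L.length, 0 < L.get k) : L.length ≤ S.blocks.card := by
  calc L.length = Fintype.card (Fin L.length) := (Fintype.card_fin _).symm
  _ = (Finset.univ.image (fun k : Fin L.length => S.blockOf (v0 hpos k))).card := by
      rw [Finset.card_image_of_injective _ (blockOf_v0_inj hpos), Finset.card_univ]
  _ ≤ S.blocks.card := Finset.card_le_card (image_v0_subset hpos)

lemma pathType_of_card_eq (hpos : ∀ k : Fin L.length, 0 < L.get k) (h : S.blocks.card = L.length) : S.pathType = (L : Multiset ℕ) := by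
  have himg : Finset.univ.image (fun k : Fin L.length => S.blockOf (v0 hpos k)) = S.blocks := by
    apply Finset.eq_of_subset_of_card_le (image_v0_subset hpos)
    rw [h, Finset.card_image_of_injective _ (blockOf_v0_inj hpos), Finset.card_univ,
      Fintype.card_fin]
  have hexh : ∀ v : PCVert L [], ∃ k : Fin L.length,
      S.blockOf v = S.blockOf (v0 hpos k) ∧ pk v = (k : ℕ) := by
    intro v
    have hbv : S.blockOf v ∈ S.blocks := (mem_blocks S).mpr ⟨v, rfl⟩
    rw [← himg] at hbv
    obtain ⟨k, -, hk⟩ := Finset.mem_image.mp hbv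
    refine ⟨k, hk.symm, ?_⟩
    have h1 : v ∈ S.blockOf (v0 hpos k) := by rw [hk]; exact self_mem_blockOf S v
    have h2 := connRel_pk ((mem_blockOf S).mp h1)
    exact h2.symm
  have hblock : ∀ k : Fin L.length,
      S.blockOf (v0 hpos k) = Finset.univ.filter (fun v => pk v = (k : ℕ)) := by
    intro k
    ext v
    rw [mem_blockOf, Finset.mem_filter]
    constructor
    · intro hv
      exact ⟨Finset.mem_univ v, (connRel_pk hv).symm ▸ rfl⟩
    · rintro ⟨-, hv⟩
      obtain ⟨k', hk', hpk⟩ := hexh v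
      have : k' = k := Fin.ext (by rw [← hpk, hv])
      subst this
      have h1 : v ∈ S.blockOf (v0 hpos k') := by rw [← hk']; exact self_mem_blockOf S v
      exact (mem_blockOf S).mp h1
  have hcard : ∀ k : Fin L.length, (S.blockOf (v0 hpos k)).card = L.get k := by
    intro k
    rw [hblock k]
    have hfil : Finset.univ.filter (fun v : PCVert L [] => pk v = (k : ℕ))
        = Finset.univ.image (fun i : Fin (L.get k) => (Sum.inl ⟨k, i⟩ : PCVert L [])) := by
      ext v
      rw [Finset.mem_filter, Finset.mem_image]
      constructor
      · rintro ⟨-, hv⟩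
        obtain ⟨⟨k', i⟩, rfl⟩ := pcVert_cases v
        have : k' = k := Fin.ext hv
        subst this
        exact ⟨i, Finset.mem_univ i, rfl⟩
      · rintro ⟨i, -, rfl⟩
        exact ⟨Finset.mem_univ _, rfl⟩
    rw [hfil, Finset.card_image_of_injective, Finset.card_univ, Fintype.card_fin]
    intro i j hij
    have := Sum.inl.inj hij
    simpa using this
  have hmapimg : (Finset.univ.image (fun k : Fin L.length => S.blockOf (v0 hpos k))).val
      = Finset.univ.val.map (fun k => S.blockOf (v0 hpos k)) :=
    Finset.image_val_of_injOn ((blockOf_v0_inj hpos).injOn)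
  rw [pathType_eq, ← himg, hmapimg, Multiset.map_map]
  have : (Finset.card ∘ fun k : Fin L.length => S.blockOf (v0 hpos k))
      = fun k : Fin L.length => L.get k := by
    funext k; exact hcard k
  rw [this, Fin.univ_val_map, List.ofFn_get]

lemma pathType_of_card_pathType (hpos : ∀ k : Fin L.length, 0 < L.get k) (h : Multiset.card S.pathType = L.length) :
    S.pathType = (L : Multiset ℕ) :=
  pathType_of_card_eq hpos (by rw [← card_pathType]; exact h)

lemma card_pathType_ge (hpos : ∀ k : Fin L.length, 0 < L.get k) : L.length ≤ Multiset.card S.pathType := by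
  rw [card_pathType]; exact blocks_card_ge hpos

/-- The full path cover of `D_L`, containing every edge. -/
def fullCover (L : List ℕ) : PCC (pcEdges L []) where
  next v :=
    match v with
    | Sum.inl ⟨k, i⟩ =>
        if h : (i : ℕ) + 1 < L.get k then some (Sum.inl ⟨k, ⟨(i : ℕ) + 1, h⟩⟩) else none
    | Sum.inr _ => none
  mem_edges := by
    intro u v h
    obtain ⟨⟨k, i⟩, rfl⟩ := pcVert_cases u
    dsimp only at h
    split_ifs at h with hlt
    · obtain rfl := Option.some.inj h
      rw [pcEdges, Finset.mem_filter]
      exact ⟨Finset.mem_univ _, rfl, rfl⟩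
  inj := by
    intro u u' v h h'
    obtain ⟨⟨k, i⟩, rfl⟩ := pcVert_cases u
    obtain ⟨⟨k', i'⟩, rfl⟩ := pcVert_cases u'
    dsimp only at h h'
    split_ifs at h h' with h1 h2
    · obtain rfl := Option.some.inj h
      have h3 := Option.some.inj h'
      obtain ⟨hk, hi⟩ := Sigma.mk.inj_iff.mp (Sum.inl.inj h3)
      subst hk
      have h4 : (i' : ℕ) + 1 = (i : ℕ) + 1 := congrArg Fin.val (eq_of_heq hi)
      have h5 : i' = i := Fin.ext (by omega)
      subst h5
      rfl

lemma fullCover_conn (hpos : ∀ k : Fin L.length, 0 < L.get k) (k : Fin L.length) :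
    ∀ (m : ℕ) (h : m < L.get k),
      (fullCover L).connRel (v0 hpos k) (Sum.inl ⟨k, ⟨m, h⟩⟩) := by
  intro m
  induction m with
  | zero => intro h; exact EqvGen.refl _
  | succ m ih =>
    intro h
    have hm : m < L.get k := by omega
    refine EqvGen.trans _ _ _ (ih hm) (EqvGen.rel _ _ ?_)
    show (fullCover L).next (Sum.inl ⟨k, ⟨m, hm⟩⟩) = _
    simp only [fullCover]
    rw [dif_pos h]

lemma pathType_fullCover (hpos : ∀ k : Fin L.length, 0 < L.get k) :
    (fullCover L).pathType = (L : Multiset ℕ) := by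
  apply pathType_of_card_eq hpos
  apply le_antisymm
  · have hsub : (fullCover L).blocks ⊆
        Finset.univ.image (fun k : Fin L.length => (fullCover L).blockOf (v0 hpos k)) := by
      intro b hb
      obtain ⟨v, rfl⟩ := (mem_blocks _).mp hb
      obtain ⟨⟨k, i⟩, rfl⟩ := pcVert_cases v
      refine Finset.mem_image.mpr ⟨k, Finset.mem_univ k, ?_⟩
      exact (blockOf_eq_of_rel _ (EqvGen.symm _ _ (fullCover_conn hpos k i i.isLt))).symm
    calc (fullCover L).blocks.card ≤ _ := Finset.card_le_card hsub
    _ ≤ (Finset.univ : Finset (Fin L.length)).card := Finset.card_image_le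
    _ = L.length := by rw [Finset.card_univ, Fintype.card_fin]
  · exact blocks_card_ge hpos

end PathCase

/-! ### Part III : the coefficient matrix and the main theorem -/

/-- The linear map sending a power series to its coefficients at the canonical monomials
of partitions of `n`. -/
def Phi (n : ℕ) : MvPowerSeries ℕ ℚ →ₗ[ℚ] (Nat.Partition n → ℚ) :=
  LinearMap.pi fun p => evalAt (canon p.parts)

lemma maugP_apply {σ : Type*} (P : σ → Prop) (mu : Multiset ℕ) (d : σ →₀ ℕ) :
    maugP P mu d = (rfact mu : ℚ) * (if (∀ s ∈ d.support, P s) ∧ expShape d = mu then 1 else 0) :=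
  rfl

lemma maugP_canon {n : ℕ} (mu : Multiset ℕ) (p : Nat.Partition n) :
    maugP (fun _ : ℕ => True) mu (canon p.parts)
      = if p.parts = mu then (rfact mu : ℚ) else 0 := by
  rw [maugP_apply]
  have h1 : expShape (canon p.parts) = p.parts :=
    expShape_canon p.parts (fun _ hx => p.parts_pos hx)
  by_cases h : p.parts = mu
  · rw [if_pos ⟨fun _ _ => trivial, by rw [h1, h]⟩, if_pos h, mul_one]
  · rw [if_neg (by rintro ⟨-, h2⟩; exact h (by rw [← h1, h2])), if_neg h, mul_zero]

lemma XiTilde1_eval (lam : Multiset ℕ) (d : ℕ →₀ ℕ) :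
    XiTilde1 lam d = ∑ S : PCC (pcEdges (lam.sort (· ≤ ·)) []),
      ((Multiset.card S.pathType).factorial : ℚ)⁻¹ * maugP (fun _ : ℕ => True) S.pathType d := by
  have h1 : XiTilde1 lam d = evalAt d (XiTilde1 lam) := rfl
  rw [h1, XiTilde1, map_sum]
  exact Finset.sum_congr rfl fun S _ => rfl

lemma rfact_pos (mu : Multiset ℕ) : 0 < rfact mu :=
  Finset.prod_pos fun i _ => Nat.factorial_pos _

lemma sort_pos {n : ℕ} (p : Nat.Partition n) :
    ∀ k : Fin (p.parts.sort (· ≤ ·)).length, 0 < (p.parts.sort (· ≤ ·)).get k := by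
  intro k
  apply p.parts_pos
  refine (Multiset.mem_sort (r := (· ≤ ·))).mp ?_
  rw [List.get_eq_getElem]
  exact List.getElem_mem k.isLt

lemma sort_coe {n : ℕ} (p : Nat.Partition n) :
    ((p.parts.sort (· ≤ ·) : List ℕ) : Multiset ℕ) = p.parts :=
  Multiset.sort_eq _ _

lemma partition_ext {n : ℕ} {p q : Nat.Partition n} (h : p.parts = q.parts) : p = q := by
  cases p; cases q; simpa using h

lemma entry_eq_zero {n : ℕ} (lam mu : Nat.Partition n) (hne : lam ≠ mu)
    (hle : Multiset.card mu.parts ≤ Multiset.card lam.parts) :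
    XiTilde1 lam.parts (canon mu.parts) = 0 := by
  rw [XiTilde1_eval]
  apply Finset.sum_eq_zero
  intro S _
  rw [maugP_canon]
  by_cases h : mu.parts = S.pathType
  · exfalso
    have hlen : (lam.parts.sort (· ≤ ·)).length = Multiset.card lam.parts :=
      Multiset.length_sort _
    have hge : (lam.parts.sort (· ≤ ·)).length ≤ Multiset.card S.pathType :=
      card_pathType_ge (sort_pos lam)
    have hcardmu : Multiset.card mu.parts = Multiset.card S.pathType := by rw [h]
    have heq : Multiset.card S.pathType = (lam.parts.sort (· ≤ ·)).length := by omega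
    have hPT : S.pathType = ((lam.parts.sort (· ≤ ·) : List ℕ) : Multiset ℕ) :=
      pathType_of_card_pathType (sort_pos lam) heq
    have hmulam : mu.parts = lam.parts := by rw [h, hPT, sort_coe]
    exact hne (partition_ext hmulam).symm
  · rw [if_neg h, mul_zero]

lemma entry_diag_ne {n : ℕ} (lam : Nat.Partition n) :
    XiTilde1 lam.parts (canon lam.parts) ≠ 0 := by
  rw [XiTilde1_eval]
  apply ne_of_gt
  apply Finset.sum_pos'
  · intro S _
    apply mul_nonneg
    · positivity
    · rw [maugP_canon]
      split_ifs
      · positivity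
      · exact le_refl 0
  · refine ⟨fullCover (lam.parts.sort (· ≤ ·)), Finset.mem_univ _, ?_⟩
    rw [maugP_canon]
    have hPT : (fullCover (lam.parts.sort (· ≤ ·))).pathType = lam.parts := by
      rw [pathType_fullCover (sort_pos lam), sort_coe]
    rw [if_pos hPT.symm]
    apply mul_pos
    · have := Nat.factorial_pos (Multiset.card (fullCover (lam.parts.sort (· ≤ ·))).pathType)
      positivity
    · exact_mod_cast rfact_pos _

lemma xiTilde_mem (n : ℕ) (lam : Nat.Partition n) : XiTilde1 lam.parts ∈ homSymSpace n := by
  constructor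
  · intro e d
    rw [XiTilde1_eval, XiTilde1_eval]
    refine Finset.sum_congr rfl fun S _ => ?_
    congr 1
    rw [maugP_apply, maugP_apply, expShape_equivMapDomain]
    simp
  · intro d hd
    rw [XiTilde1_eval] at hd
    obtain ⟨S, -, hS⟩ : ∃ S ∈ (Finset.univ : Finset (PCC (pcEdges (lam.parts.sort (· ≤ ·)) []))),
        ((Multiset.card S.pathType).factorial : ℚ)⁻¹
          * maugP (fun _ : ℕ => True) S.pathType d ≠ 0 := by
      by_contra hc
      push_neg at hc
      exact hd (Finset.sum_eq_zero hc)
    have hm : maugP (fun _ : ℕ => True) S.pathType d ≠ 0 := fun h => hS (by rw [h, mul_zero])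
    rw [maugP_apply] at hm
    have hsh : expShape d = S.pathType := by
      by_contra hc
      exact hm (by rw [if_neg (by rintro ⟨-, h⟩; exact hc h), mul_zero])
    calc ∑ s ∈ d.support, d s = (expShape d).sum := (expShape_sum d).symm
    _ = S.pathType.sum := by rw [hsh]
    _ = (lam.parts.sort (· ≤ ·)).sum := sum_pathType (S := S)
    _ = lam.parts.sum := by
        conv_rhs => rw [← sort_coe lam]
        exact (Multiset.sum_coe _).symm
    _ = n := lam.parts_sum

/-- The functions `Ξ̃_λ`, for `λ` an integer partition of `n`, form a linear basis of the
space of homogeneous symmetric functions of degree `n` over the rationals. -/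
theorem xiTilde_basis (n : ℕ) :
    LinearIndependent ℚ (fun lam : Nat.Partition n => XiTilde1 lam.parts) ∧
      Submodule.span ℚ (Set.range fun lam : Nat.Partition n => XiTilde1 lam.parts) =
        homSymSpace n := by
  have hmem := xiTilde_mem n
  set F : Nat.Partition n → MvPowerSeries ℕ ℚ := fun lam => XiTilde1 lam.parts with hF
  have hdiag : ∀ i : Nat.Partition n, Phi n (F i) i ≠ 0 := fun i => entry_diag_ne i
  have hv : LinearIndependent ℚ (fun lam => Phi n (F lam)) := by
    rw [Fintype.linearIndependent_iff]
    intro g hg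
    suffices H : ∀ m (i : Nat.Partition n), Multiset.card i.parts ≤ m → g i = 0 by
      exact fun i => H (Multiset.card i.parts) i le_rfl
    intro m
    induction m using Nat.strong_induction_on with
    | _ m ih =>
      intro i hi
      have h0 := congrFun hg i
      simp only [Finset.sum_apply, Pi.smul_apply, smul_eq_mul, Pi.zero_apply] at h0
      have h1 : ∀ j ∈ Finset.univ, j ≠ i → g j * Phi n (F j) i = 0 := by
        intro j _ hji
        by_cases hc : Multiset.card i.parts ≤ Multiset.card j.parts
        · have h2 : Phi n (F j) i = 0 := entry_eq_zero j i hji hc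
          rw [h2, mul_zero]
        · push_neg at hc
          have h3 : g j = 0 := ih (Multiset.card j.parts) (by omega) j le_rfl
          rw [h3, zero_mul]
      rw [Finset.sum_eq_single_of_mem i (Finset.mem_univ i) h1] at h0
      rcases mul_eq_zero.mp h0 with h | h
      · exact h
      · exact absurd h (hdiag i)
  have hlin : LinearIndependent ℚ F := LinearIndependent.of_comp (Phi n) hv
  refine ⟨hlin, ?_⟩
  have hcard : Fintype.card (Nat.Partition n) = Module.finrank ℚ (Nat.Partition n → ℚ) := by
    rw [Module.finrank_fintype_fun_eq_card]
  have htop : Submodule.span ℚ (Set.range (fun lam => Phi n (F lam))) = ⊤ :=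
    hv.span_eq_top_of_card_eq_finrank' hcard
  have hrange : Set.range (fun lam => Phi n (F lam)) = Phi n '' Set.range F := by
    rw [← Set.range_comp]; rfl
  have hsub : Submodule.span ℚ (Set.range F) ≤ homSymSpace n := by
    rw [Submodule.span_le]; rintro _ ⟨lam, rfl⟩; exact hmem lam
  apply le_antisymm hsub
  intro g hg
  have h2 : Phi n g ∈ Submodule.map (Phi n) (Submodule.span ℚ (Set.range F)) := by
    rw [Submodule.map_span, ← hrange, htop]; trivial
  rcases Submodule.mem_map.mp h2 with ⟨h, hh, hPhi⟩
  have hgh : g - h = 0 := by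
    apply eq_zero_of_vanish (g - h) (Submodule.sub_mem _ hg (hsub hh))
    intro p
    have hval : h (canon p.parts) = g (canon p.parts) := congrFun hPhi p
    have hsubapp : (g - h) (canon p.parts) = g (canon p.parts) - h (canon p.parts) := rfl
    rw [hsubapp, hval, sub_self]
  have hgheq : g = h := by rwa [sub_eq_zero] at hgh
  rw [hgheq]
  exact hh
end
end

section
/- For any finite simple graph G and any indeterminate t, X_G(t) = Σ_{S ⊆ E(G)} t^{|S|}·p_{λ(S)}, where λ(S) is the integer partition whose parts are the numbers of vertices of the connected components of the spanning subgraph of G with edge set S, and p_μ denotes the power sum symmetric function. -/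
open scoped Classical
open Finset Relation

noncomputable section

/-- The monomial symmetric function `m_lam`, with coefficients in `ℚ[t]`. -/
def msfT {σ : Type*} (lam : Multiset ℕ) : MvPowerSeries σ (Polynomial ℚ) :=
  fun d => if expShape d = lam then 1 else 0

/-- The power sum symmetric function `p_lam`, with coefficients in `ℚ[t]`. -/
def ppT {σ : Type*} (lam : Multiset ℕ) : MvPowerSeries σ (Polynomial ℚ) :=
  (lam.map fun n => msfT ({n} : Multiset ℕ)).prod

noncomputable instance {W : Type*} [Fintype W] (H : SimpleGraph W) :
    Fintype H.ConnectedComponent := Fintype.ofFinite _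

/-- `λ(S)` for a spanning subgraph: the multiset of the numbers of vertices of its
connected components. -/
def compPartition {W : Type*} [Fintype W] (H : SimpleGraph W) : Multiset ℕ :=
  (Finset.univ : Finset H.ConnectedComponent).val.map fun c =>
    (Finset.univ.filter fun w => H.connectedComponentMk w = c).card

/-- `X_G(t) = ∑_κ (1+t)^{m(κ)} x^κ`, summed over all maps `κ : V(G) → ℕ`, where `m(κ)` is
the number of monochromatic edges: a symmetric function in `x` with coefficients in
`ℚ[t]`.  (The coefficient of a monomial `e` is the sum of `(1+t)^{m(κ)}` over all maps `κ`
using each color `m` exactly `e m` times.) -/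
def XGt {W : Type*} [Fintype W] [DecidableEq W] (G : SimpleGraph W) :
    MvPowerSeries ℕ (Polynomial ℚ) := fun e =>
  ∑ κ : W → ↥e.support,
    if ∀ m : ℕ, (Finset.univ.filter fun w => ((κ w : ℕ) = m)).card = e m then
      (1 + Polynomial.X : Polynomial ℚ) ^
        ((G.edgeFinset.filter fun ed => (ed.map fun w => ((κ w : ℕ))).IsDiag).card)
    else 0

section AuxProofs

set_option linter.unusedSectionVars false

variable {W : Type*} [Fintype W] [DecidableEq W]

lemma apply_eq_of_reachable {α : Type*} {H : SimpleGraph W} {κ : W → α}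
    (h : ∀ v w, H.Adj v w → κ v = κ w) {v w : W} (hr : H.Reachable v w) :
    κ v = κ w := by
  obtain ⟨p⟩ := hr
  induction p with
  | nil => rfl
  | cons ha _ ih => exact (h _ _ ha).trans ih

lemma sz_pos (H : SimpleGraph W) (c : H.ConnectedComponent) :
    0 < (Finset.univ.filter fun w => H.connectedComponentMk w = c).card := by
  refine SimpleGraph.ConnectedComponent.ind (fun w => ?_) c
  exact Finset.card_pos.2 ⟨w, Finset.mem_filter.2 ⟨Finset.mem_univ w, rfl⟩⟩

lemma expShape_single {σ : Type*} (i : σ) {n : ℕ} (hn : n ≠ 0) :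
    expShape (Finsupp.single i n) = {n} := by
  rw [expShape, Finsupp.support_single_ne_zero i hn]
  simp

lemma expShape_eq_single {σ : Type*} {d : σ →₀ ℕ} {n : ℕ} (h : expShape d = {n}) :
    ∃ i, d = Finsupp.single i n := by
  have hcard : d.support.card = 1 := by
    have h2 := congrArg Multiset.card h
    simpa [expShape] using h2
  obtain ⟨i, hi⟩ := Finset.card_eq_one.1 hcard
  refine ⟨i, ?_⟩
  have h3 := (Finsupp.support_eq_singleton.1 hi).2
  have h4 : d i = n := by
    rw [expShape, hi] at h
    simpa using h
  rw [h3, h4]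

lemma count_fiber (H : SimpleGraph W) (f : H.ConnectedComponent → ℕ) (m : ℕ) :
    (Finset.univ.filter fun w : W => f (H.connectedComponentMk w) = m).card =
      ∑ c : H.ConnectedComponent,
        if f c = m then
          (Finset.univ.filter fun w => H.connectedComponentMk w = c).card else 0 := by
  rw [Finset.card_eq_sum_card_fiberwise (f := fun w : W => H.connectedComponentMk w)
      (t := Finset.univ.filter fun c => f c = m)
      (fun x hx => by
        simp only [Finset.mem_coe, Finset.mem_filter, Finset.mem_univ, true_and] at hx ⊢
        exact hx)]
  rw [Finset.sum_filter]
  refine Finset.sum_congr rfl fun c _ => ?_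
  by_cases hc : f c = m
  · rw [if_pos hc, if_pos hc]
    congr 1
    ext w
    simp only [Finset.mem_filter, Finset.mem_univ, true_and]
    exact ⟨fun h => h.2, fun h => ⟨by rw [h, hc], h⟩⟩
  · rw [if_neg hc, if_neg hc]

lemma core_card (H : SimpleGraph W) (e : ℕ →₀ ℕ) :
    MvPowerSeries.coeff (R := Polynomial ℚ) e (ppT (compPartition H)) =
      ((Finset.univ.filter fun κ : W → ↥e.support =>
          (∀ m : ℕ, (Finset.univ.filter fun w => ((κ w : ℕ) = m)).card = e m) ∧
          ∀ v w : W, H.Adj v w → κ v = κ w).card : Polynomial ℚ) := by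
  classical
  have hppT : ppT (compPartition H) =
      ∏ c : H.ConnectedComponent,
        (msfT {(Finset.univ.filter fun w => H.connectedComponentMk w = c).card} :
          MvPowerSeries ℕ (Polynomial ℚ)) := by
    unfold ppT compPartition
    rw [Multiset.map_map]
    rfl
  rw [hppT, MvPowerSeries.coeff_prod]
  have hterm : ∀ l ∈ Finset.finsuppAntidiag (Finset.univ : Finset H.ConnectedComponent) e,
      (∏ c : H.ConnectedComponent, MvPowerSeries.coeff (R := Polynomial ℚ) (l c)
          (msfT {(Finset.univ.filter fun w => H.connectedComponentMk w = c).card})) =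
        if (∀ c ∈ (Finset.univ : Finset H.ConnectedComponent),
            expShape (l c) =
              ({(Finset.univ.filter fun w => H.connectedComponentMk w = c).card} : Multiset ℕ))
          then (1 : Polynomial ℚ) else 0 := by
    intro l _
    show (∏ c : H.ConnectedComponent,
        if expShape (l c) =
            ({(Finset.univ.filter fun w => H.connectedComponentMk w = c).card} : Multiset ℕ)
          then (1 : Polynomial ℚ) else 0) = _
    rw [Finset.prod_boole]
    by_cases h : ∀ c ∈ (Finset.univ : Finset H.ConnectedComponent),
        expShape (l c) =
          ({(Finset.univ.filter fun w => H.connectedComponentMk w = c).card} : Multiset ℕ)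
    · rw [if_pos h, if_pos h]
    · rw [if_neg h, if_neg h]
  rw [Finset.sum_congr rfl hterm, Finset.sum_boole, Nat.cast_inj]
  symm
  refine Finset.card_bij
    (fun κ hκ => Finsupp.equivFunOnFinite.symm fun c =>
      Finsupp.single
        (SimpleGraph.ConnectedComponent.lift (fun w => ((κ w : ℕ)))
          (fun v w p _ =>
            apply_eq_of_reachable
              (fun v w ha => congrArg Subtype.val ((Finset.mem_filter.1 hκ).2.2 v w ha))
              p.reachable) c)
        ((Finset.univ.filter fun w => H.connectedComponentMk w = c).card))
    ?_ ?_ ?_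
  · -- membership
    intro κ hκ
    obtain ⟨-, hcount, hadj⟩ := Finset.mem_filter.1 hκ
    rw [Finset.mem_filter, Finset.mem_finsuppAntidiag]
    refine ⟨⟨?_, Finset.subset_univ _⟩, ?_⟩
    · ext m
      rw [Finset.sum_apply']
      simp only [Finsupp.coe_equivFunOnFinite_symm, Finsupp.single_apply]
      rw [← hcount m, ← count_fiber H _ m]
      rfl
    · intro c _
      simp only [Finsupp.coe_equivFunOnFinite_symm]
      exact expShape_single _ (sz_pos H c).ne'
  · -- injectivity
    intro κ₁ h₁ κ₂ h₂ heq
    funext w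
    have hg := Finsupp.equivFunOnFinite.symm.injective heq
    have h3 := congrFun hg (H.connectedComponentMk w)
    have h4 := Finsupp.single_left_injective
      (sz_pos H (H.connectedComponentMk w)).ne' h3
    exact Subtype.ext h4
  · -- surjectivity
    intro l hl
    rw [Finset.mem_filter, Finset.mem_finsuppAntidiag] at hl
    obtain ⟨⟨hsum, -⟩, hshape⟩ := hl
    choose g hg using fun c => expShape_eq_single (hshape c (Finset.mem_univ c))
    have hepos : ∀ c, e (g c) ≠ 0 := by
      intro c
      have h1 : (l c) (g c) ≤ (∑ c' : H.ConnectedComponent, l c') (g c) := by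
        rw [Finset.sum_apply']
        exact Finset.single_le_sum (f := fun c' => (l c') (g c))
          (fun _ _ => Nat.zero_le _) (Finset.mem_univ c)
      rw [hsum] at h1
      have h2 : (l c) (g c) = (Finset.univ.filter fun w => H.connectedComponentMk w = c).card := by
        rw [hg c]; simp
      have h4 := sz_pos H c
      omega
    set κ : W → ↥e.support :=
      fun w => ⟨g (H.connectedComponentMk w), Finsupp.mem_support_iff.2 (hepos _)⟩ with hκdef
    have hκmem : κ ∈ Finset.univ.filter fun κ : W → ↥e.support =>
        (∀ m : ℕ, (Finset.univ.filter fun w => ((κ w : ℕ) = m)).card = e m) ∧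
        ∀ v w : W, H.Adj v w → κ v = κ w := by
      rw [Finset.mem_filter]
      refine ⟨Finset.mem_univ _, fun m => ?_, fun v w hvw => ?_⟩
      · have hfil : (Finset.univ.filter fun w : W => ((κ w : ℕ) = m)) =
            (Finset.univ.filter fun w : W => g (H.connectedComponentMk w) = m) := rfl
        rw [hfil, count_fiber H g m]
        conv_rhs => rw [← hsum]
        rw [Finset.sum_apply']
        exact Finset.sum_congr rfl fun c _ =>
          (show (l c) m = _ by rw [hg c, Finsupp.single_apply]).symm
      · have hmk : H.connectedComponentMk v = H.connectedComponentMk w :=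
          SimpleGraph.ConnectedComponent.sound hvw.reachable
        exact Subtype.ext (congrArg g hmk)
    refine ⟨κ, hκmem, ?_⟩
    refine Finsupp.ext fun c => ?_
    simp only [Finsupp.coe_equivFunOnFinite_symm]
    refine SimpleGraph.ConnectedComponent.ind (fun w => ?_) c
    rw [SimpleGraph.ConnectedComponent.lift_mk]
    exact (hg _).symm

end AuxProofs

/-- `X_G(t) = ∑_{S ⊆ E(G)} t^{|S|} p_{λ(S)}`, where `λ(S)` is the partition of the vertex
set given by the connected components of the spanning subgraph with edge set `S`. -/
theorem XGt_power_sum_expansion {W : Type*} [Fintype W] [DecidableEq W]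
    (G : SimpleGraph W) :
    XGt G = ∑ S ∈ G.edgeFinset.powerset,
      (MvPowerSeries.C (σ := ℕ) (R := Polynomial ℚ)) (Polynomial.X ^ S.card) *
        ppT (compPartition (SimpleGraph.fromEdgeSet (↑S : Set (Sym2 W)))) := by
  classical
  funext e
  show MvPowerSeries.coeff (R := Polynomial ℚ) e (XGt G)
    = MvPowerSeries.coeff (R := Polynomial ℚ) e (∑ S ∈ G.edgeFinset.powerset,
        (MvPowerSeries.C (σ := ℕ) (R := Polynomial ℚ)) (Polynomial.X ^ S.card) *
          ppT (compPartition (SimpleGraph.fromEdgeSet (↑S : Set (Sym2 W)))))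
  rw [map_sum,
    Finset.sum_congr rfl (fun (S : Finset (Sym2 W)) (_ : S ∈ G.edgeFinset.powerset) =>
      MvPowerSeries.coeff_C_mul e
        (ppT (compPartition (SimpleGraph.fromEdgeSet (↑S : Set (Sym2 W)))))
        (Polynomial.X ^ S.card))]
  show (∑ κ : W → ↥e.support,
    if ∀ m : ℕ, (Finset.univ.filter fun w => ((κ w : ℕ) = m)).card = e m then
      (1 + Polynomial.X : Polynomial ℚ) ^
        ((G.edgeFinset.filter fun ed => (ed.map fun w => ((κ w : ℕ))).IsDiag).card)
    else 0) = _
  have hexp : ∀ κ : W → ↥e.support,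
      (1 + Polynomial.X : Polynomial ℚ) ^
        ((G.edgeFinset.filter fun ed => (ed.map fun w => ((κ w : ℕ))).IsDiag).card)
      = ∑ S ∈ G.edgeFinset.powerset,
          if S ⊆ G.edgeFinset.filter (fun ed => (ed.map fun w => ((κ w : ℕ))).IsDiag)
          then (Polynomial.X : Polynomial ℚ) ^ S.card else 0 := by
    intro κ
    set M := G.edgeFinset.filter fun ed => (ed.map fun w => ((κ w : ℕ))).IsDiag with hM
    have h1 : (1 + Polynomial.X : Polynomial ℚ) ^ M.card
        = ∏ _ed ∈ M, ((Polynomial.X : Polynomial ℚ) + 1) := by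
      rw [Finset.prod_const, add_comm]
    rw [h1, Finset.prod_add]
    simp only [Finset.prod_const, Finset.prod_const_one, mul_one, one_pow]
    have h2 : M.powerset = G.edgeFinset.powerset.filter (fun S => S ⊆ M) := by
      ext S
      simp only [Finset.mem_powerset, Finset.mem_filter]
      exact ⟨fun h => ⟨h.trans (Finset.filter_subset _ _), h⟩, fun h => h.2⟩
    rw [h2, Finset.sum_filter]
  have step1 : ∀ κ : W → ↥e.support,
      (if ∀ m : ℕ, (Finset.univ.filter fun w => ((κ w : ℕ) = m)).card = e m then
        (1 + Polynomial.X : Polynomial ℚ) ^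
          ((G.edgeFinset.filter fun ed => (ed.map fun w => ((κ w : ℕ))).IsDiag).card)
      else 0)
      = ∑ S ∈ G.edgeFinset.powerset,
          if (∀ m : ℕ, (Finset.univ.filter fun w => ((κ w : ℕ) = m)).card = e m) ∧
              S ⊆ G.edgeFinset.filter (fun ed => (ed.map fun w => ((κ w : ℕ))).IsDiag)
          then (Polynomial.X : Polynomial ℚ) ^ S.card else 0 := by
    intro κ
    by_cases h : ∀ m : ℕ, (Finset.univ.filter fun w => ((κ w : ℕ) = m)).card = e m
    · rw [if_pos h, hexp κ]
      exact Finset.sum_congr rfl fun S _ => by simp [h]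
    · rw [if_neg h]
      simp [h]
  rw [Finset.sum_congr rfl fun κ _ => step1 κ, Finset.sum_comm]
  refine Finset.sum_congr rfl fun S hS => ?_
  have hSE : S ⊆ G.edgeFinset := Finset.mem_powerset.1 hS
  have hcond : ∀ κ : W → ↥e.support,
      (S ⊆ G.edgeFinset.filter fun ed => (ed.map fun w => ((κ w : ℕ))).IsDiag)
      ↔ ∀ v w : W, (SimpleGraph.fromEdgeSet (↑S : Set (Sym2 W))).Adj v w → κ v = κ w := by
    intro κ
    constructor
    · intro hsub v w hvw
      rw [SimpleGraph.fromEdgeSet_adj] at hvw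
      have h2 := (Finset.mem_filter.1 (hsub (Finset.mem_coe.1 hvw.1))).2
      rw [Sym2.map_pair_eq, Sym2.mk_isDiag_iff] at h2
      exact Subtype.ext h2
    · intro hadj ed hed
      rw [Finset.mem_filter]
      refine ⟨hSE hed, ?_⟩
      induction ed using Sym2.ind with
      | _ v w =>
        rw [Sym2.map_pair_eq, Sym2.mk_isDiag_iff]
        by_cases hvw : v = w
        · rw [hvw]
        · have hadj2 : (SimpleGraph.fromEdgeSet (↑S : Set (Sym2 W))).Adj v w := by
            rw [SimpleGraph.fromEdgeSet_adj]
            exact ⟨Finset.mem_coe.2 hed, hvw⟩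
          exact congrArg Subtype.val (hadj v w hadj2)
  have hrw : ∀ κ : W → ↥e.support,
      (if (∀ m : ℕ, (Finset.univ.filter fun w => ((κ w : ℕ) = m)).card = e m) ∧
          S ⊆ G.edgeFinset.filter (fun ed => (ed.map fun w => ((κ w : ℕ))).IsDiag)
        then (Polynomial.X : Polynomial ℚ) ^ S.card else 0)
      = if (∀ m : ℕ, (Finset.univ.filter fun w => ((κ w : ℕ) = m)).card = e m) ∧
          ∀ v w : W, (SimpleGraph.fromEdgeSet (↑S : Set (Sym2 W))).Adj v w → κ v = κ w
        then (Polynomial.X : Polynomial ℚ) ^ S.card else 0 :=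
    fun κ => if_congr (and_congr Iff.rfl (hcond κ)) rfl rfl
  rw [Finset.sum_congr rfl fun κ _ => hrw κ, ← Finset.sum_filter, Finset.sum_const,
    core_card (SimpleGraph.fromEdgeSet (↑S : Set (Sym2 W))) e, nsmul_eq_mul, mul_comm]
  convert rfl
  rfl
end
end
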